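/- arXiv:2001.03249 — 6 statements merged into one kernel-verified Lean document; each statement's English description precedes it below -/
import Mathlib

section
/- Let p > 1 be a real number and let x₁, x₂, y₁, y₂ be real numbers such that (x₂ − x₁)(y₂ − y₁) > 0. Then |x₁ − y₂|^p + |x₂ − y₁|^p > |x₁ − y₁|^p + |x₂ − y₂|^p. That is, for the weight w(x,y) = |x − y|^p with p > 1, the 'crossed' matching of the pairs of points costs strictly more than the 'parallel' matching whenever the two pairs have the same orientation. -/
open Set

lemma abs_rpow_strictConvexOn {p : ℝ} (hp : 1 < p) :
    StrictConvexOn ℝ Set.univ (fun x : ℝ => |x| ^ p) := by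
  have h0 : (0:ℝ) < p := lt_trans one_pos hp
  refine ⟨convex_univ, ?_⟩
  intro x _ y _ hxy a b ha hb hab
  simp only [smul_eq_mul]
  have habs : |a * x + b * y| ≤ a * |x| + b * |y| := by
    calc |a * x + b * y| ≤ |a * x| + |b * y| := abs_add_le _ _
    _ = a * |x| + b * |y| := by rw [abs_mul, abs_mul, abs_of_pos ha, abs_of_pos hb]
  rcases eq_or_ne |x| |y| with hxy' | hxy'
  · -- then x = -y, y ≠ 0
    have hx0 : x = -y := by
      rcases abs_eq_abs.1 hxy' with h1 | h1
      · exact absurd h1 hxy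
      · exact h1
    have hy0 : y ≠ 0 := by
      intro h; apply hxy; rw [hx0, h]; ring
    have hlt : |a * x + b * y| < |y| := by
      rw [hx0]
      have : a * -y + b * y = (b - a) * y := by ring
      rw [this, abs_mul]
      have : |b - a| < 1 := by
        rw [abs_lt]; constructor <;> linarith
      calc |b - a| * |y| < 1 * |y| := by
            apply mul_lt_mul_of_pos_right this (abs_pos.2 hy0)
      _ = |y| := one_mul _
    have := Real.rpow_lt_rpow (abs_nonneg _) hlt h0
    calc |a * x + b * y| ^ p < |y| ^ p := this
    _ = a * |x| ^ p + b * |y| ^ p := by rw [hxy']; rw [← add_mul, hab, one_mul]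
  · have h1 : |a * x + b * y| ^ p ≤ (a * |x| + b * |y|) ^ p :=
      Real.rpow_le_rpow (abs_nonneg _) habs h0.le
    have h2 : (a * |x| + b * |y|) ^ p < a * |x| ^ p + b * |y| ^ p := by
      have := (strictConvexOn_rpow hp).2 (mem_Ici.2 (abs_nonneg x)) (mem_Ici.2 (abs_nonneg y))
        hxy' ha hb hab
      simpa using this
    exact lt_of_le_of_lt h1 h2

lemma key {p u v s t : ℝ} (hp : 1 < p) (hus : u < s) (hsv : s < v) (hut : u < t)
    (htv : t < v) (hsum : s + t = u + v) :
    |s| ^ p + |t| ^ p < |u| ^ p + |v| ^ p := by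
  have huv : u < v := lt_trans hus hsv
  have hne : u ≠ v := ne_of_lt huv
  set f : ℝ → ℝ := fun x => |x| ^ p with hf
  have hconv := abs_rpow_strictConvexOn hp
  have hd : (0:ℝ) < v - u := by linarith
  set l := (v - s) / (v - u) with hl
  have hl0 : 0 < l := div_pos (by linarith) hd
  have hl1 : 0 < 1 - l := by
    have : l < 1 := (div_lt_one hd).2 (by linarith)
    linarith
  have hs : l • u + (1 - l) • v = s := by
    simp only [smul_eq_mul]
    have e : l * (v - u) = v - s := by rw [hl]; exact div_mul_cancel₀ _ hd.ne'
    linear_combination -e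
  have ht : (1 - l) • u + l • v = t := by
    simp only [smul_eq_mul] at hs ⊢
    linear_combination -hs - hsum
  have H1 : f s < l * f u + (1 - l) * f v := by
    have := hconv.2 (mem_univ u) (mem_univ v) hne hl0 hl1 (by ring)
    rw [hs] at this; simpa using this
  have H2 : f t < (1 - l) * f u + l * f v := by
    have := hconv.2 (mem_univ u) (mem_univ v) hne hl1 hl0 (by ring)
    rw [ht] at this; simpa using this
  have : f s + f t < f u + f v := by nlinarith [H1, H2]
  exact this

/-- For the weight `w(x,y) = |x-y|^p` with `p > 1`, the crossed matching of two pairs of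
points on the line costs strictly more than the parallel matching whenever the two pairs
have the same orientation. -/
theorem stmt_3 (p x₁ x₂ y₁ y₂ : ℝ) (hp : 1 < p) (h : (x₂ - x₁) * (y₂ - y₁) > 0) :
    |x₁ - y₁| ^ p + |x₂ - y₂| ^ p < |x₁ - y₂| ^ p + |x₂ - y₁| ^ p := by
  rcases mul_pos_iff.1 h with ⟨hx, hy⟩ | ⟨hx, hy⟩
  · -- x₁ < x₂, y₁ < y₂
    have := key (p := p) (u := x₁ - y₂) (v := x₂ - y₁) (s := x₁ - y₁) (t := x₂ - y₂) hp
      (by linarith) (by linarith) (by linarith) (by linarith) (by ring)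
    linarith
  · -- x₂ < x₁, y₂ < y₁
    have := key (p := p) (u := x₂ - y₁) (v := x₁ - y₂) (s := x₁ - y₁) (t := x₂ - y₂) hp
      (by linarith) (by linarith) (by linarith) (by linarith) (by ring)
    linarith
end

section
/- Let p > 1 be a real number, let N ≥ 3, and let r : {1,…,N} → ℝ be nondecreasing (r₁ ≤ r₂ ≤ ⋯ ≤ r_N). For a permutation σ of {1,…,N}, define the Hamiltonian-cycle cost E(σ) = Σ_{i=1}^{N} |r_{σ(i+1)} − r_{σ(i)}|^p, where indices are taken cyclically (σ(N+1) := σ(1)). Then for every permutation σ, E(σ) ≥ |r₂ − r₁|^p + |r_N − r_{N−1}|^p + Σ_{i=1}^{N−2} |r_{i+2} − r_i|^p; that is, the cycle that joins the two leftmost points, the two rightmost points, and otherwise joins each point to its second neighbor is an optimal traveling-salesman tour on the complete graph with weights |r_i − r_j|^p. -/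
open Finset

/-- Convexity: the increment of `x ↦ x^p` over an interval of length `h` grows with the
starting point. -/
lemma key_convex {p : ℝ} (hp : 1 ≤ p) {x y h : ℝ} (hx : 0 ≤ x) (hxy : x ≤ y) (hh : 0 ≤ h) :
    (x + h) ^ p - x ^ p ≤ (y + h) ^ p - y ^ p := by
  rcases eq_or_lt_of_le (show x ≤ y + h by linarith) with heq | hlt
  · have hy : y = x := le_antisymm (by linarith) hxy
    have hh0 : h = 0 := by rw [hy] at heq; linarith
    simp [hy, hh0]
  · have cf : ConvexOn ℝ (Set.Ici 0) fun x : ℝ => x ^ p := convexOn_rpow hp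
    have hD0 : 0 < y + h - x := by linarith
    have hyx : (0:ℝ) ≤ y - x := by linarith
    have h1 : (x + h) ^ p ≤ ((y-x)/(y+h-x)) * x ^ p + (h/(y+h-x)) * (y+h) ^ p := by
      have := cf.2 (Set.mem_Ici.2 hx) (Set.mem_Ici.2 (by linarith : (0:ℝ) ≤ y + h))
        (show (0:ℝ) ≤ (y-x)/(y+h-x) by positivity) (show (0:ℝ) ≤ h/(y+h-x) by positivity)
        (show (y-x)/(y+h-x) + h/(y+h-x) = 1 by field_simp; ring)
      have heqpt : ((y-x)/(y+h-x)) • x + (h/(y+h-x)) • (y+h) = x + h := by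
        rw [smul_eq_mul, smul_eq_mul]; field_simp; ring
      rw [heqpt] at this
      simpa [smul_eq_mul] using this
    have h2 : y ^ p ≤ (h/(y+h-x)) * x ^ p + ((y-x)/(y+h-x)) * (y+h) ^ p := by
      have := cf.2 (Set.mem_Ici.2 hx) (Set.mem_Ici.2 (by linarith : (0:ℝ) ≤ y + h))
        (show (0:ℝ) ≤ h/(y+h-x) by positivity) (show (0:ℝ) ≤ (y-x)/(y+h-x) by positivity)
        (show h/(y+h-x) + (y-x)/(y+h-x) = 1 by field_simp; ring)
      have heqpt : (h/(y+h-x)) • x + ((y-x)/(y+h-x)) • (y+h) = y := by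
        rw [smul_eq_mul, smul_eq_mul]; field_simp; ring
      rw [heqpt] at this
      simpa [smul_eq_mul] using this
    have hsum : (h/(y+h-x)) + ((y-x)/(y+h-x)) = 1 := by field_simp; ring
    have e1 : (h/(y+h-x)) * x^p + ((y-x)/(y+h-x)) * x^p = x^p := by
      rw [← add_mul, hsum, one_mul]
    have e2 : (h/(y+h-x)) * (y+h)^p + ((y-x)/(y+h-x)) * (y+h)^p = (y+h)^p := by
      rw [← add_mul, hsum, one_mul]
    linarith

/-- Edge decomposition: an edge spanning gaps `a..a+n-1` costs at least the sum of
single-gap powers plus the consecutive-pair excesses. -/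
lemma claimC {p : ℝ} (hp : 1 ≤ p) (R : ℕ → ℝ) (hR : Monotone R) (a n : ℕ) :
    ∑ j ∈ Ico a (a + n), (R (j+1) - R j) ^ p
      + ∑ t ∈ Ico a (a + n - 1),
          ((R (t+2) - R t) ^ p - (R (t+1) - R t) ^ p - (R (t+2) - R (t+1)) ^ p)
    ≤ (R (a + n) - R a) ^ p := by
  induction n with
  | zero =>
    simp [Real.zero_rpow (by linarith : p ≠ 0)]
  | succ m ih =>
    rcases Nat.eq_zero_or_pos m with hm | hm
    · subst hm
      simp [Finset.sum_Ico_succ_top (Nat.le_refl a) (fun j => (R (j+1) - R j)^p) ]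
    · have h1 : a + (m + 1) = (a + m) + 1 := by ring
      rw [h1, Finset.sum_Ico_succ_top (by omega : a ≤ a + m)]
      have h2 : (a + m) + 1 - 1 = (a + (m-1)) + 1 := by omega
      rw [h2, Finset.sum_Ico_succ_top (by omega : a ≤ a + (m-1))]
      have h3 : a + (m - 1) = a + m - 1 := by omega
      rw [h3]
      have key := key_convex hp (x := R (a+m) - R (a+m-1)) (y := R (a+m) - R a)
        (h := R (a+m+1) - R (a+m))
        (by have := hR (show a+m-1 ≤ a+m by omega); linarith)
        (by have := hR (show a ≤ a+m-1 by omega); linarith)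
        (by have := hR (show a+m ≤ a+m+1 by omega); linarith)
      have hm1 : a + m - 1 + 2 = a + m + 1 := by omega
      have hm2 : a + m - 1 + 1 = a + m := by omega
      rw [hm1, hm2] at *
      have ex : R (a+m) - R (a+m-1) + (R (a+m+1) - R (a+m)) = R (a+m+1) - R (a+m-1) := by ring
      have ey : R (a+m) - R a + (R (a+m+1) - R (a+m)) = R (a+m+1) - R a := by ring
      rw [ex, ey] at key
      linarith [ih]

open Fin.NatCast in
/-- On a cycle, if `f` holds somewhere and fails somewhere, there is a descent `f i ∧ ¬ f (i+1)`. -/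
lemma cyclic_cross {N : ℕ} [NeZero N] (f : Fin N → Prop) (a b : Fin N)
    (ha : f a) (hb : ¬ f b) : ∃ i, f i ∧ ¬ f (i + 1) := by
  by_contra hcon
  push_neg at hcon
  have key : ∀ k : ℕ, f (a + (k : Fin N)) := by
    intro k
    induction k with
    | zero => simpa using ha
    | succ n ih =>
      have := hcon _ ih
      have hcast : ((n+1 : ℕ) : Fin N) = (n : Fin N) + 1 := by push_cast; ring
      rw [hcast, ← add_assoc]
      exact this
  have h2 := key (b - a).val
  rw [Fin.cast_val_eq_self] at h2
  have h3 : a + (b - a) = b := add_sub_cancel a b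
  rw [h3] at h2
  exact hb h2

/-- Counting helper: if every `j < M` lies in at least `c` of the intervals `[A i, B i)`,
then the double sum dominates `c` times the plain sum. -/
lemma sum_sum_Ico_ge {N M : ℕ} (A B : Fin N → ℕ) (hB : ∀ i, B i ≤ M) (F : ℕ → ℝ)
    (hF : ∀ j, 0 ≤ F j) (c : ℕ)
    (hc : ∀ j < M, ∃ s : Finset (Fin N), c ≤ s.card ∧ ∀ i ∈ s, A i ≤ j ∧ j < B i) :
    (c : ℝ) * ∑ j ∈ range M, F j ≤ ∑ i : Fin N, ∑ j ∈ Ico (A i) (B i), F j := by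
  have step1 : ∀ i : Fin N, ∑ j ∈ Ico (A i) (B i), F j
      = ∑ j ∈ range M, if j ∈ Ico (A i) (B i) then F j else 0 := by
    intro i
    rw [Finset.sum_ite_mem]
    congr 1
    refine (Finset.inter_eq_right.2 ?_).symm
    intro j hj
    rw [Finset.mem_Ico] at hj
    rw [Finset.mem_range]
    have := hB i
    omega
  rw [Finset.sum_congr rfl (fun i _ => step1 i), Finset.sum_comm, Finset.mul_sum]
  apply Finset.sum_le_sum
  intro j hj
  rw [Finset.mem_range] at hj
  obtain ⟨s, hcard, hs⟩ := hc j hj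
  have h1 : ∑ i ∈ s, (if j ∈ Ico (A i) (B i) then F j else 0)
      ≤ ∑ i : Fin N, (if j ∈ Ico (A i) (B i) then F j else 0) :=
    Finset.sum_le_sum_of_subset_of_nonneg (Finset.subset_univ s)
      (fun i _ _ => by split_ifs <;> simp [hF j])
  have h2 : ∑ i ∈ s, (if j ∈ Ico (A i) (B i) then F j else 0) = s.card * F j := by
    rw [Finset.sum_congr rfl (fun i hi => if_pos (Finset.mem_Ico.2 (hs i hi)))]
    rw [Finset.sum_const, nsmul_eq_mul]
  have h3 : (c : ℝ) * F j ≤ (s.card : ℝ) * F j :=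
    mul_le_mul_of_nonneg_right (by exact_mod_cast hcard) (hF j)
  linarith

set_option maxHeartbeats 2000000 in
/-- For `p > 1` and ordered points `r 0 ≤ r 1 ≤ ⋯ ≤ r (N-1)` on the line, the Hamiltonian
cycle joining the two leftmost points, the two rightmost points, and otherwise each point
to its second neighbor, is an optimal traveling-salesman tour for weights `|rᵢ - rⱼ|^p`. -/
theorem stmt_4 (N : ℕ) (hN : 3 ≤ N) (p : ℝ) (hp : 1 < p)
    (r : Fin N → ℝ) (hr : Monotone r) (σ : Equiv.Perm (Fin N)) :
    |r ⟨1, by omega⟩ - r ⟨0, by omega⟩| ^ p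
      + |r ⟨N - 1, by omega⟩ - r ⟨N - 2, by omega⟩| ^ p
      + ∑ i : Fin (N - 2), |r ⟨i.1 + 2, by have := i.2; omega⟩ - r ⟨i.1, by have := i.2; omega⟩| ^ p
    ≤ ∑ i : Fin N, |r (σ ⟨(i.1 + 1) % N, Nat.mod_lt _ (by omega)⟩) - r (σ i)| ^ p := by
  haveI : NeZero N := ⟨by omega⟩
  have hp1 : (1:ℝ) ≤ p := le_of_lt hp
  -- extend `r` to `ℕ`
  set R : ℕ → ℝ := fun k => r ⟨min k (N-1), by omega⟩ with hRdef
  have hRmono : Monotone R := by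
    intro k l hkl
    exact hr (by simp only [Fin.mk_le_mk]; omega)
  have hRr : ∀ (k : ℕ) (h : k < N), R k = r ⟨k, h⟩ := by
    intro k h
    simp only [hRdef]
    congr 1
    simp only [Fin.mk.injEq]
    omega
  set u : Fin N → ℕ := fun i => (σ i).1 with hudef
  have hult : ∀ i, u i ≤ N - 1 := by
    intro i
    show (σ i).1 ≤ N - 1
    have := (σ i).2
    omega
  have hru : ∀ i : Fin N, r (σ i) = R (u i) := by
    intro i
    rw [hRr (u i) (σ i).2]
  -- rewrite cyclic index
  have hidx : ∀ i : Fin N, (⟨(i.1 + 1) % N, Nat.mod_lt _ (by omega : 0 < N)⟩ : Fin N) = i + 1 := by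
    intro i
    apply Fin.ext
    simp only [Fin.add_def, Fin.val_one']
    rw [Nat.mod_eq_of_lt (show 1 < N by omega)]
  have hRHS : ∀ i : Fin N, |r (σ ⟨(i.1 + 1) % N, Nat.mod_lt _ (by omega : 0 < N)⟩) - r (σ i)| ^ p
      = |R (u (i+1)) - R (u i)| ^ p := by
    intro i
    rw [hidx i, hru, hru]
  -- gap and excess functions
  set gp : ℕ → ℝ := fun j => (R (j+1) - R j) ^ p with hgpdef
  set dd : ℕ → ℝ := fun t =>
    (R (t+2) - R t) ^ p - (R (t+1) - R t) ^ p - (R (t+2) - R (t+1)) ^ p with hdddef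
  have hgpnn : ∀ j, 0 ≤ gp j := by
    intro j
    show (0:ℝ) ≤ (R (j+1) - R j) ^ p
    have := hRmono (Nat.le_succ j)
    exact Real.rpow_nonneg (by linarith) p
  have hddnn : ∀ t, 0 ≤ dd t := by
    intro t
    have key := key_convex hp1 (x := 0) (y := R (t+1) - R t) (h := R (t+2) - R (t+1))
      le_rfl (by have := hRmono (Nat.le_succ t); linarith)
      (by have := hRmono (Nat.le_succ (t+1)); linarith)
    simp only [zero_add] at key
    rw [Real.zero_rpow (by linarith : p ≠ 0)] at key
    have e : R (t+1) - R t + (R (t+2) - R (t+1)) = R (t+2) - R t := by ring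
    rw [e] at key
    show (0:ℝ) ≤ (R (t+2) - R t) ^ p - (R (t+1) - R t) ^ p - (R (t+2) - R (t+1)) ^ p
    linarith
  -- min/max endpoints of each edge
  set A : Fin N → ℕ := fun i => min (u i) (u (i+1)) with hAdef
  set B : Fin N → ℕ := fun i => max (u i) (u (i+1)) with hBdef
  have hAB : ∀ i, A i ≤ B i := fun i => min_le_max
  have hBle : ∀ i, B i ≤ N - 1 := fun i => max_le (hult i) (hult (i+1))
  have hedge : ∀ i : Fin N, |R (u (i+1)) - R (u i)| = R (B i) - R (A i) := by
    intro i
    rcases le_total (u i) (u (i+1)) with hle | hle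
    · show |R (u (i+1)) - R (u i)| = R (max (u i) (u (i+1))) - R (min (u i) (u (i+1)))
      rw [min_eq_left hle, max_eq_right hle]
      exact abs_of_nonneg (by have := hRmono hle; linarith)
    · show |R (u (i+1)) - R (u i)| = R (max (u i) (u (i+1))) - R (min (u i) (u (i+1)))
      rw [min_eq_right hle, max_eq_left hle, abs_sub_comm]
      exact abs_of_nonneg (by have := hRmono hle; linarith)
  -- per-edge lower bound
  have hperedge : ∀ i : Fin N,
      ∑ j ∈ Ico (A i) (B i), gp j + ∑ t ∈ Ico (A i) (B i - 1), dd t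
      ≤ |R (u (i+1)) - R (u i)| ^ p := by
    intro i
    rw [hedge i]
    have h := claimC hp1 R hRmono (A i) (B i - A i)
    have hBsum : A i + (B i - A i) = B i := by have := hAB i; omega
    rw [hBsum] at h
    exact h
  -- cyclic positions of the extreme points
  set pos0 : Fin N := σ.symm ⟨0, by omega⟩ with hpos0
  set posT : Fin N := σ.symm ⟨N-1, by omega⟩ with hposT
  have hu0 : u pos0 = 0 := by
    show (σ (σ.symm ⟨0, by omega⟩)).1 = 0
    rw [Equiv.apply_symm_apply]
  have huT : u posT = N - 1 := by
    show (σ (σ.symm ⟨N-1, by omega⟩)).1 = N - 1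
    rw [Equiv.apply_symm_apply]
  have huinj : ∀ i j : Fin N, u i = u j → i = j := by
    intro i j hij
    exact σ.injective (Fin.ext hij)
  -- Fact A: every gap is crossed at least twice
  have factA : ∀ j < N - 1, ∃ s : Finset (Fin N), 2 ≤ s.card ∧ ∀ i ∈ s, A i ≤ j ∧ j < B i := by
    intro j hj
    obtain ⟨i1, hi1, hi1'⟩ := cyclic_cross (fun i => u i ≤ j) pos0 posT
      (by show u pos0 ≤ j; omega) (by show ¬ u posT ≤ j; omega)
    obtain ⟨i2, hi2, hi2'⟩ := cyclic_cross (fun i => ¬ (u i ≤ j)) posT pos0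
      (by show ¬ u posT ≤ j; omega) (by show ¬ ¬ u pos0 ≤ j; rw [not_not]; omega)
    simp only [not_not] at hi2 hi2'
    refine ⟨{i1, i2}, ?_, ?_⟩
    · rw [Finset.card_pair (by
        intro h
        rw [h] at hi1
        omega)]
    · intro i hi
      rw [Finset.mem_insert, Finset.mem_singleton] at hi
      have hAi1 : A i1 = min (u i1) (u (i1+1)) := rfl
      have hBi1 : B i1 = max (u i1) (u (i1+1)) := rfl
      have hAi2 : A i2 = min (u i2) (u (i2+1)) := rfl
      have hBi2 : B i2 = max (u i2) (u (i2+1)) := rfl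
      rcases hi with h | h <;> subst h <;> omega
  -- Fact B: every interior vertex is jumped over at least once
  have factB : ∀ t < N - 2, ∃ s : Finset (Fin N), 1 ≤ s.card ∧
      ∀ i ∈ s, A i ≤ t ∧ t < B i - 1 := by
    intro t ht
    by_contra hno
    push_neg at hno
    have hno' : ∀ i : Fin N, ¬ (A i ≤ t ∧ t + 2 ≤ B i) := by
      intro i hcontra
      obtain ⟨i', hmem, hcond⟩ := hno {i} (by simp)
      rw [Finset.mem_singleton] at hmem
      subst hmem
      have := hcond hcontra.1
      omega
    obtain ⟨i2, hi2, hi2'⟩ := cyclic_cross (fun i => ¬ (u i < t + 1)) posT pos0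
      (by show ¬ u posT < t + 1; omega)
      (by show ¬ ¬ u pos0 < t + 1; rw [not_not]; omega)
    simp only [not_not] at hi2 hi2'
    obtain ⟨i3, hi3, hi3'⟩ := cyclic_cross (fun i => u i ≤ t + 1) pos0 posT
      (by show u pos0 ≤ t + 1; omega) (by show ¬ u posT ≤ t + 1; omega)
    have hA2 := hno' i2
    have hA3 := hno' i3
    have hAi2 : A i2 = min (u i2) (u (i2+1)) := rfl
    have hBi2 : B i2 = max (u i2) (u (i2+1)) := rfl
    have hAi3 : A i3 = min (u i3) (u (i3+1)) := rfl
    have hBi3 : B i3 = max (u i3) (u (i3+1)) := rfl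
    have h23 : i2 = i3 := huinj _ _ (by omega)
    subst h23
    omega
  -- the two counting bounds
  have boundI : (2 : ℝ) * ∑ j ∈ range (N-1), gp j
      ≤ ∑ i : Fin N, ∑ j ∈ Ico (A i) (B i), gp j := by
    have h := sum_sum_Ico_ge A B hBle gp hgpnn 2 factA
    exact_mod_cast h
  have boundII : (1 : ℝ) * ∑ t ∈ range (N-2), dd t
      ≤ ∑ i : Fin N, ∑ t ∈ Ico (A i) (B i - 1), dd t := by
    have hB'le : ∀ i, B i - 1 ≤ N - 2 := fun i => by have := hBle i; omega
    have h := sum_sum_Ico_ge A (fun i => B i - 1) hB'le dd hddnn 1 factB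
    exact_mod_cast h
  -- combine the counting bounds with the per-edge lower bounds
  have main : (2:ℝ) * ∑ j ∈ range (N-1), gp j + ∑ t ∈ range (N-2), dd t
      ≤ ∑ i : Fin N, |R (u (i+1)) - R (u i)| ^ p := by
    have hsplit : ∑ i : Fin N, (∑ j ∈ Ico (A i) (B i), gp j + ∑ t ∈ Ico (A i) (B i - 1), dd t)
        = ∑ i : Fin N, ∑ j ∈ Ico (A i) (B i), gp j
          + ∑ i : Fin N, ∑ t ∈ Ico (A i) (B i - 1), dd t := Finset.sum_add_distrib
    have h4 : ∑ i : Fin N, (∑ j ∈ Ico (A i) (B i), gp j + ∑ t ∈ Ico (A i) (B i - 1), dd t)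
        ≤ ∑ i : Fin N, |R (u (i+1)) - R (u i)| ^ p :=
      Finset.sum_le_sum (fun i _ => hperedge i)
    rw [hsplit] at h4
    linarith
  -- identify the left-hand side with `2 ∑ gp + ∑ dd`
  have hL1 : |r (⟨1, by omega⟩ : Fin N) - r ⟨0, by omega⟩| ^ p = gp 0 := by
    show _ = (R (0+1) - R 0) ^ p
    rw [hRr (0+1) (by omega), hRr 0 (by omega)]
    congr 1
    exact abs_of_nonneg (by
      have h01 : (⟨0, by omega⟩ : Fin N) ≤ ⟨0+1, by omega⟩ := by
        simp only [Fin.mk_le_mk]; omega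
      have := hr h01
      linarith)
  have hL2 : |r (⟨N-1, by omega⟩ : Fin N) - r ⟨N-2, by omega⟩| ^ p = gp (N-2) := by
    show _ = (R (N-2+1) - R (N-2)) ^ p
    have e : N - 2 + 1 = N - 1 := by omega
    rw [e, hRr (N-1) (by omega), hRr (N-2) (by omega)]
    congr 1
    exact abs_of_nonneg (by
      have h01 : (⟨N-2, by omega⟩ : Fin N) ≤ ⟨N-1, by omega⟩ := by
        simp only [Fin.mk_le_mk]; omega
      have := hr h01
      linarith)
  have hL3 : ∑ i : Fin (N - 2),
        |r ⟨i.1 + 2, by have := i.2; omega⟩ - r ⟨i.1, by have := i.2; omega⟩| ^ p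
      = ∑ t ∈ range (N-2), (R (t+2) - R t) ^ p := by
    rw [← Fin.sum_univ_eq_sum_range (fun t => (R (t+2) - R t) ^ p) (N-2)]
    apply Finset.sum_congr rfl
    intro i _
    have hi2 : i.1 + 2 < N := by have := i.2; omega
    have hi1 : i.1 < N := by have := i.2; omega
    rw [hRr (i.1+2) hi2, hRr i.1 hi1]
    congr 1
    exact abs_of_nonneg (by
      have h01 : (⟨i.1, hi1⟩ : Fin N) ≤ ⟨i.1+2, hi2⟩ := by
        simp only [Fin.mk_le_mk]; omega
      have := hr h01
      linarith)
  -- the algebraic identity for the target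
  have hsum1 : ∑ t ∈ range (N-2), (fun j => (R (j+1) - R j) ^ p) t
      = ∑ j ∈ range (N-1), gp j - gp (N-2) := by
    have e : N - 1 = (N - 2) + 1 := by omega
    rw [e, Finset.sum_range_succ]
    show _ = (∑ j ∈ range (N-2), gp j) + gp (N-2) - gp (N-2)
    simp only [hgpdef]
    ring
  have hsum2 : ∑ t ∈ range (N-2), (fun j => (R (j+1) - R j) ^ p) (t+1)
      = ∑ j ∈ range (N-1), gp j - gp 0 := by
    have e : N - 1 = (N - 2) + 1 := by omega
    rw [e, Finset.sum_range_succ']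
    show _ = ((∑ j ∈ range (N-2), gp (j+1)) + gp 0) - gp 0
    simp only [hgpdef]
    ring
  have hdsum : ∑ t ∈ range (N-2), dd t
      = ∑ t ∈ range (N-2), (R (t+2) - R t) ^ p
        - (∑ j ∈ range (N-1), gp j - gp (N-2))
        - (∑ j ∈ range (N-1), gp j - gp 0) := by
    rw [← hsum1, ← hsum2]
    rw [← Finset.sum_sub_distrib, ← Finset.sum_sub_distrib]
  calc |r (⟨1, by omega⟩ : Fin N) - r ⟨0, by omega⟩| ^ p
      + |r (⟨N-1, by omega⟩ : Fin N) - r ⟨N-2, by omega⟩| ^ p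
      + ∑ i : Fin (N - 2),
          |r ⟨i.1 + 2, by have := i.2; omega⟩ - r ⟨i.1, by have := i.2; omega⟩| ^ p
      = (2:ℝ) * ∑ j ∈ range (N-1), gp j + ∑ t ∈ range (N-2), dd t := by
        rw [hL1, hL2, hL3, hdsum]
        ring
    _ ≤ ∑ i : Fin N, |R (u (i+1)) - R (u i)| ^ p := main
    _ = ∑ i : Fin N, |r (σ ⟨(i.1 + 1) % N, Nat.mod_lt _ (by omega : 0 < N)⟩) - r (σ i)| ^ p :=
        (Finset.sum_congr rfl (fun i _ => hRHS i)).symm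
end

section
/- Let p < 0 be a real number, let N ≥ 5 be odd, and let r : {0,…,N−1} → ℝ be strictly increasing (r₀ < r₁ < ⋯ < r_{N−1}). For a permutation σ of {0,…,N−1}, define the Hamiltonian-cycle cost E(σ) = Σ_{i=0}^{N−1} |r_{σ(i+1 mod N)} − r_{σ(i)}|^p. Let σ* be the permutation σ*(i) = i·(N+1)/2 mod N (so each vertex a is joined to the vertices a + (N−1)/2 mod N and a + (N+1)/2 mod N). Then for every permutation σ, E(σ) ≥ E(σ*); that is, σ* is an optimal traveling-salesman tour on the complete graph with weights |r_i − r_j|^p when p < 0. -/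
open Finset

namespace Stmt6

/-- monotonicity: for `p<0`, `x ≤ y` (both positive) implies `y^p ≤ x^p`. -/
lemma mono_rpow {p x y : ℝ} (hp : p < 0) (hx : 0 < x) (hxy : x ≤ y) :
    y ^ p ≤ x ^ p :=
  Real.rpow_le_rpow_of_nonpos hx hxy hp.le

/-- convexity: for `p<0`, the increment `x ↦ (x+d)^p - x^p` is monotone on `x>0`. -/
lemma conv_rpow {p : ℝ} (hp : p < 0) {a b d : ℝ} (ha : 0 < a) (hab : a ≤ b) (hd : 0 ≤ d) :
    (a + d) ^ p - a ^ p ≤ (b + d) ^ p - b ^ p := by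
  have key : MonotoneOn (fun x : ℝ => (x + d) ^ p - x ^ p) (Set.Ioi 0) := by
    have hderiv : ∀ x ∈ Set.Ioi (0:ℝ),
        HasDerivAt (fun x : ℝ => (x + d) ^ p - x ^ p)
          (1 * p * (x + d) ^ (p-1) - p * x ^ (p-1)) x := by
      intro x hx
      have hx0 : (0:ℝ) < x := hx
      have h1 : HasDerivAt (fun x : ℝ => (x + d) ^ p) (1 * p * (x + d) ^ (p-1)) x := by
        have := ((hasDerivAt_id x).add_const d).rpow_const
          (p := p) (Or.inl (by positivity))
        simpa using this
      have h2 : HasDerivAt (fun x : ℝ => x ^ p) (p * x ^ (p-1)) x :=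
        Real.hasDerivAt_rpow_const (Or.inl (ne_of_gt hx0))
      exact h1.sub h2
    apply monotoneOn_of_deriv_nonneg (convex_Ioi 0)
    · exact fun x hx => ((hderiv x hx).continuousAt).continuousWithinAt
    · intro x hx
      rw [interior_Ioi] at hx
      exact (hderiv x hx).differentiableAt.differentiableWithinAt
    · intro x hx
      rw [interior_Ioi] at hx
      rw [(hderiv x hx).deriv]
      have hx0 : (0:ℝ) < x := hx
      have hle : (x + d) ^ (p-1) ≤ x ^ (p-1) :=
        Real.rpow_le_rpow_of_nonpos hx0 (by linarith) (by linarith)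
      have : 0 ≤ p * ((x + d) ^ (p-1) - x ^ (p-1)) :=
        mul_nonneg_of_nonpos_of_nonpos hp.le (by linarith)
      nlinarith
  exact key (Set.mem_Ioi.2 ha) (Set.mem_Ioi.2 (lt_of_lt_of_le ha hab)) hab


section Defs

variable (N : ℕ) (r : Fin N → ℝ) (p : ℝ) (m : ℕ)

noncomputable def Rf (i : ℕ) : ℝ := if h : i < N then r ⟨i, h⟩ else 0

noncomputable def F (i j : ℕ) : ℝ := (Rf N r j - Rf N r i) ^ p

noncomputable def Wf (b : ℕ) : ℝ := F N r p b (b + m)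

noncomputable def Vf (a : ℕ) : ℝ := F N r p a (a + m + 1)

noncomputable def Af (j : ℕ) : ℝ := F N r p 0 (max j 1)

noncomputable def Bf (i : ℕ) : ℝ := F N r p (min i (N - 2)) (N - 1)

noncomputable def uf (v : ℕ) : ℝ :=
  if v < m then
    ((∑ b ∈ Icc 1 v, Wf N r p m b) - (∑ a ∈ range v, Vf N r p m a) + Af N r p v) / 2
  else
    ((∑ b ∈ Ico (v - m) m, Wf N r p m b) - (∑ a ∈ Ico (v - m) m, Vf N r p m a)
      + Bf N r p v) / 2

noncomputable def yf (k : ℕ) : ℝ :=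
  if k < m then (Wf N r p m (k+1) - Vf N r p m k + Af N r p k - Af N r p (k+1)) / 2
  else (Wf N r p m (k - m) - Vf N r p m (k - m) + Bf N r p (k+1) - Bf N r p k) / 2

noncomputable def Ys (i j : ℕ) : ℝ := ∑ k ∈ Ico i j, yf N r p m k

noncomputable def Phi (i j : ℕ) : ℝ :=
  F N r p i j + Ys N r p m i j - uf N r p m i - uf N r p m j

end Defs

section Basic

variable {N m : ℕ} {p : ℝ} {r : Fin N → ℝ}
variable (hN : N = 2 * m + 1) (hm : 2 ≤ m) (hp : p < 0) (hr : StrictMono r)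

lemma Rf_lt (hr : StrictMono r) {i j : ℕ} (hij : i < j) (hj : j ≤ N - 1) (hN0 : 0 < N) :
    Rf N r i < Rf N r j := by
  have hjN : j < N := by omega
  have hiN : i < N := by omega
  simp only [Rf, dif_pos hjN, dif_pos hiN]
  exact hr (by exact_mod_cast hij)

lemma Rf_le (hr : StrictMono r) {i j : ℕ} (hij : i ≤ j) (hj : j ≤ N - 1) (hN0 : 0 < N) :
    Rf N r i ≤ Rf N r j := by
  rcases eq_or_lt_of_le hij with h | h
  · rw [h]
  · exact (Rf_lt hr h hj hN0).le

lemma F_pos (hr : StrictMono r) {i j : ℕ} (hij : i < j) (hj : j ≤ N - 1) (hN0 : 0 < N) :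
    0 < F N r p i j := by
  have := Rf_lt hr hij hj hN0
  unfold F
  exact Real.rpow_pos_of_pos (by linarith) _

/-- shrinking an interval increases `F` (left endpoint moves right). -/
lemma F_anti_left (hp : p < 0) (hr : StrictMono r) {i i' j : ℕ} (h1 : i ≤ i') (h2 : i' < j)
    (hj : j ≤ N - 1) (hN0 : 0 < N) : F N r p i j ≤ F N r p i' j := by
  unfold F
  have h3 : Rf N r i ≤ Rf N r i' := Rf_le hr h1 (by omega) hN0
  have h4 : Rf N r i' < Rf N r j := Rf_lt hr h2 hj hN0
  exact mono_rpow hp (by linarith) (by linarith)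

/-- shrinking an interval increases `F` (right endpoint moves left). -/
lemma F_anti_right (hp : p < 0) (hr : StrictMono r) {i j j' : ℕ} (h1 : i < j) (h2 : j ≤ j')
    (hj : j' ≤ N - 1) (hN0 : 0 < N) : F N r p i j' ≤ F N r p i j := by
  unfold F
  have h3 : Rf N r j ≤ Rf N r j' := Rf_le hr h2 hj hN0
  have h4 : Rf N r i < Rf N r j := Rf_lt hr h1 (by omega) hN0
  exact mono_rpow hp (by linarith) (by linarith)

lemma y_nonneg (hN : N = 2 * m + 1) (hm : 2 ≤ m) (hp : p < 0) (hr : StrictMono r)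
    {k : ℕ} (hk : k ≤ N - 2) : 0 ≤ yf N r p m k := by
  have hN0 : 0 < N := by omega
  unfold yf
  split_ifs with h
  · -- k < m
    have h1 : Vf N r p m k ≤ Wf N r p m (k+1) := by
      unfold Vf Wf
      have : k + 1 + m = k + m + 1 := by omega
      rw [this]
      exact F_anti_left hp hr (by omega) (by omega) (by omega) hN0
    have h2 : Af N r p (k+1) ≤ Af N r p k := by
      unfold Af
      rcases Nat.eq_zero_or_pos k with h0 | h0
      · subst h0; norm_num
      · have e1 : max k 1 = k := by omega
        have e2 : max (k+1) 1 = k + 1 := by omega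
        rw [e1, e2]
        exact F_anti_right hp hr (by omega) (by omega) (by omega) hN0
    linarith
  · -- m ≤ k ≤ N-2
    have hk1 : m ≤ k := by omega
    have h1 : Vf N r p m (k - m) ≤ Wf N r p m (k - m) := by
      unfold Vf Wf
      exact F_anti_right hp hr (by omega) (by omega) (by omega) hN0
    have h2 : Bf N r p k ≤ Bf N r p (k+1) := by
      unfold Bf
      rcases eq_or_lt_of_le hk with h0 | h0
      · have : min k (N-2) = min (k+1) (N-2) := by omega
        rw [this]
      · exact F_anti_left hp hr (by omega) (by omega) (by omega) hN0
    linarith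

end Basic


section Diffs

variable {N m : ℕ} {p : ℝ} {r : Fin N → ℝ}

lemma Bm_eq_Wm (hN : N = 2 * m + 1) (hm : 2 ≤ m) : Bf N r p m = Wf N r p m m := by
  unfold Bf Wf
  have h1 : min m (N - 2) = m := by omega
  have h2 : N - 1 = m + m := by omega
  rw [h1, h2]

lemma Am_eq_W0 (hN : N = 2 * m + 1) (hm : 2 ≤ m) : Af N r p m = Wf N r p m 0 := by
  unfold Af Wf
  have h1 : max m 1 = m := by omega
  rw [h1]
  norm_num

lemma uDiffL (hN : N = 2 * m + 1) (hm : 2 ≤ m) {k : ℕ} (hk : k < m) :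
    uf N r p m (k+1) - uf N r p m k
      = (Wf N r p m (k+1) - Vf N r p m k + Af N r p (k+1) - Af N r p k) / 2 := by
  rcases lt_or_eq_of_le (Nat.succ_le_of_lt hk) with h | h
  · -- k+1 < m : both left pattern
    rw [uf, uf, if_pos h, if_pos hk]
    rw [show Icc 1 (k+1) = Ico 1 (k+2) from (Finset.Ico_add_one_right_eq_Icc 1 (k+1)).symm,
      Finset.sum_Ico_succ_top (by omega),
      show Ico 1 (k+1) = Icc 1 k from Finset.Ico_add_one_right_eq_Icc 1 k,
      Finset.sum_range_succ]
    ring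
  · -- k+1 = m
    have hm' : m = k+1 := by omega
    subst hm'
    rw [uf, uf, if_neg (by omega), if_pos hk]
    have h0 : (k+1) - (k+1) = 0 := by omega
    rw [h0]
    have e1 : ∑ b ∈ Ico 0 (k+1), Wf N r p (k+1) b
        = Wf N r p (k+1) 0 + ∑ b ∈ Icc 1 k, Wf N r p (k+1) b := by
      rw [Finset.sum_eq_sum_Ico_succ_bot (by omega),
        show Ico (0+1) (k+1) = Icc 1 k from Finset.Ico_add_one_right_eq_Icc 1 k]
    have e2 : ∑ a ∈ Ico 0 (k+1), Vf N r p (k+1) a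
        = (∑ a ∈ range k, Vf N r p (k+1) a) + Vf N r p (k+1) k := by
      rw [show Ico 0 (k+1) = range (k+1) from by rw [Finset.range_eq_Ico],
        Finset.sum_range_succ]
    rw [e1, e2, Bm_eq_Wm hN hm, Am_eq_W0 hN hm]
    ring

lemma uDiffR (hN : N = 2 * m + 1) (hm : 2 ≤ m) {k : ℕ} (hk1 : m ≤ k) (hk2 : k ≤ N - 2) :
    uf N r p m (k+1) - uf N r p m k
      = (Vf N r p m (k - m) - Wf N r p m (k - m) + Bf N r p (k+1) - Bf N r p k) / 2 := by
  rw [uf, uf, if_neg (by omega), if_neg (by omega)]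
  have h1 : (k+1) - m = (k - m) + 1 := by omega
  have h2 : k - m < m := by omega
  rw [h1,
    show ∑ b ∈ Ico (k-m) m, Wf N r p m b
      = Wf N r p m (k-m) + ∑ b ∈ Ico (k-m+1) m, Wf N r p m b from
      Finset.sum_eq_sum_Ico_succ_bot h2 _,
    show ∑ a ∈ Ico (k-m) m, Vf N r p m a
      = Vf N r p m (k-m) + ∑ a ∈ Ico (k-m+1) m, Vf N r p m a from
      Finset.sum_eq_sum_Ico_succ_bot h2 _]
  ring

end Diffs

section Steps

variable {N m : ℕ} {p : ℝ} {r : Fin N → ℝ}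

lemma stepR (hN : N = 2 * m + 1) (hm : 2 ≤ m) {i k : ℕ} (hik : i ≤ k)
    (hk1 : m ≤ k) (hk2 : k ≤ N - 2) :
    Phi N r p m i (k+1) = Phi N r p m i k
      + ((F N r p i (k+1) - F N r p i k)
        + (Wf N r p m (k - m) - Vf N r p m (k - m))) := by
  have hys : Ys N r p m i (k+1) = Ys N r p m i k + yf N r p m k := by
    unfold Ys
    rw [Finset.sum_Ico_succ_top hik]
  have hu := uDiffR (r := r) (p := p) hN hm hk1 hk2
  have hy : yf N r p m k
      = (Wf N r p m (k - m) - Vf N r p m (k - m) + Bf N r p (k+1) - Bf N r p k) / 2 := by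
    rw [yf, if_neg (by omega)]
  unfold Phi
  rw [hys, hy]
  rw [sub_eq_iff_eq_add] at hu
  rw [hu]
  ring

lemma stepRA (hN : N = 2 * m + 1) (hm : 2 ≤ m) {i k : ℕ} (hik : i ≤ k) (hk : k < m) :
    Phi N r p m i (k+1) = Phi N r p m i k
      + ((F N r p i (k+1) - F N r p i k) + (Af N r p k - Af N r p (k+1))) := by
  have hys : Ys N r p m i (k+1) = Ys N r p m i k + yf N r p m k := by
    unfold Ys
    rw [Finset.sum_Ico_succ_top hik]
  have hu := uDiffL (r := r) (p := p) hN hm hk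
  have hy : yf N r p m k
      = (Wf N r p m (k+1) - Vf N r p m k + Af N r p k - Af N r p (k+1)) / 2 := by
    rw [yf, if_pos hk]
  unfold Phi
  rw [hys, hy]
  rw [sub_eq_iff_eq_add] at hu
  rw [hu]
  ring

lemma stepL (hN : N = 2 * m + 1) (hm : 2 ≤ m) {k j : ℕ} (hkj : k + 1 ≤ j) (hk : k < m) :
    Phi N r p m k j = Phi N r p m (k+1) j
      + ((F N r p k j - F N r p (k+1) j) + (Wf N r p m (k+1) - Vf N r p m k)) := by
  have hys : Ys N r p m k j = yf N r p m k + Ys N r p m (k+1) j := by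
    unfold Ys
    exact Finset.sum_eq_sum_Ico_succ_bot (by omega) _
  have hu := uDiffL (r := r) (p := p) hN hm hk
  have hy : yf N r p m k
      = (Wf N r p m (k+1) - Vf N r p m k + Af N r p k - Af N r p (k+1)) / 2 := by
    rw [yf, if_pos hk]
  unfold Phi
  rw [hys, hy]
  rw [sub_eq_iff_eq_add] at hu
  rw [hu]
  ring

lemma stepLB (hN : N = 2 * m + 1) (hm : 2 ≤ m) {k j : ℕ} (hkj : k + 1 ≤ j)
    (hk1 : m ≤ k) (hk2 : k ≤ N - 2) :
    Phi N r p m k j = Phi N r p m (k+1) j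
      + ((F N r p k j - F N r p (k+1) j) + (Bf N r p (k+1) - Bf N r p k)) := by
  have hys : Ys N r p m k j = yf N r p m k + Ys N r p m (k+1) j := by
    unfold Ys
    exact Finset.sum_eq_sum_Ico_succ_bot (by omega) _
  have hu := uDiffR (r := r) (p := p) hN hm hk1 hk2
  have hy : yf N r p m k
      = (Wf N r p m (k - m) - Vf N r p m (k - m) + Bf N r p (k+1) - Bf N r p k) / 2 := by
    rw [yf, if_neg (by omega)]
  unfold Phi
  rw [hys, hy]
  rw [sub_eq_iff_eq_add] at hu
  rw [hu]
  ring

end Steps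

section Equalities

variable {N m : ℕ} {p : ℝ} {r : Fin N → ℝ}

lemma E0 (hN : N = 2 * m + 1) (hm : 2 ≤ m) {j : ℕ} (h1 : 1 ≤ j) (h2 : j ≤ m) :
    Phi N r p m 0 j = 0 := by
  induction j with
  | zero => omega
  | succ j ih =>
    rcases Nat.eq_zero_or_pos j with h0 | h0
    · -- base case j+1 = 1
      subst h0
      unfold Phi Ys
      have e0 : Ico 0 1 = {0} := rfl
      rw [e0, Finset.sum_singleton]
      have hy : yf N r p m 0
          = (Wf N r p m 1 - Vf N r p m 0 + Af N r p 0 - Af N r p 1) / 2 := by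
        rw [yf, if_pos (by omega)]
      have hu0 : uf N r p m 0 = Af N r p 0 / 2 := by
        rw [uf, if_pos (by omega)]
        simp
      have hu1 : uf N r p m 1
          = (Wf N r p m 1 - Vf N r p m 0 + Af N r p 1) / 2 := by
        rw [uf, if_pos (by omega)]
        have : Icc 1 1 = {1} := rfl
        rw [this, Finset.sum_singleton, Finset.sum_range_one]
      have hA01 : Af N r p 0 = Af N r p 1 := rfl
      have hA1 : Af N r p 1 = F N r p 0 1 := rfl
      rw [hy, hu0, hu1, hA01, hA1]
      ring
    · -- step
      have hstep := stepRA (r := r) (p := p) hN hm (i := 0) (k := j)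
        (by omega) (by omega)
      rw [hstep, ih (by omega) (by omega)]
      have hAj : Af N r p j = F N r p 0 j := by
        unfold Af
        rw [show max j 1 = j from by omega]
      have hAj1 : Af N r p (j+1) = F N r p 0 (j+1) := by
        unfold Af
        rw [show max (j+1) 1 = j+1 from by omega]
      rw [hAj, hAj1]
      ring

lemma E1 (hN : N = 2 * m + 1) (hm : 2 ≤ m) {i : ℕ} (h1 : m ≤ i) (h2 : i ≤ N - 2) :
    Phi N r p m i (N-1) = 0 := by
  -- downward induction via t := N - 2 - i
  have key : ∀ t, t ≤ m - 1 → Phi N r p m (N-2-t) (N-1) = 0 := by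
    intro t
    induction t with
    | zero =>
      intro _
      have hNv : N - 2 - 0 = 2*m - 1 := by omega
      have hN1 : N - 1 = 2*m := by omega
      rw [hNv, hN1]
      unfold Phi Ys
      have e0 : Ico (2*m-1) (2*m) = {2*m-1} := by
        ext x
        simp [Finset.mem_Ico]
        omega
      rw [e0, Finset.sum_singleton]
      have hy : yf N r p m (2*m-1)
          = (Wf N r p m (m-1) - Vf N r p m (m-1)
            + Bf N r p (2*m) - Bf N r p (2*m-1)) / 2 := by
        rw [yf, if_neg (by omega), show 2*m-1-m = m-1 from by omega,
          show 2*m-1+1 = 2*m from by omega]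
      have hu1 : uf N r p m (2*m-1)
          = (Wf N r p m (m-1) - Vf N r p m (m-1) + Bf N r p (2*m-1)) / 2 := by
        rw [uf, if_neg (by omega), show 2*m-1-m = m-1 from by omega]
        have e1 : Ico (m-1) m = {m-1} := by
          ext x
          simp [Finset.mem_Ico]
          omega
        rw [e1, Finset.sum_singleton, Finset.sum_singleton]
      have hu2 : uf N r p m (2*m) = Bf N r p (2*m) / 2 := by
        rw [uf, if_neg (by omega), show 2*m-m = m from by omega]
        simp
      have hB1 : Bf N r p (2*m-1) = F N r p (2*m-1) (2*m) := by
        unfold Bf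
        rw [show min (2*m-1) (N-2) = 2*m-1 from by omega,
          show N-1 = 2*m from by omega]
      have hB2 : Bf N r p (2*m) = F N r p (2*m-1) (2*m) := by
        unfold Bf
        rw [show min (2*m) (N-2) = 2*m-1 from by omega,
          show N-1 = 2*m from by omega]
      rw [hy, hu1, hu2, hB1, hB2]
      ring
    | succ t ih =>
      intro ht
      have hi : N - 2 - (t+1) = (N - 2 - t) - 1 := by omega
      set i := N - 2 - (t+1) with hidef
      have hi1 : i + 1 = N - 2 - t := by omega
      have him : m ≤ i := by omega
      have hstep := stepLB (r := r) (p := p) hN hm (k := i) (j := N-1)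
        (by omega) him (by omega)
      have hBi : Bf N r p i = F N r p i (N-1) := by
        unfold Bf
        rw [show min i (N-2) = i from by omega]
      have hBi1 : Bf N r p (i+1) = F N r p (i+1) (N-1) := by
        unfold Bf
        rw [show min (i+1) (N-2) = i+1 from by omega]
      rw [hstep, hBi, hBi1, hi1, ih (by omega)]
      ring
  have := key (N - 2 - i) (by omega)
  rw [show N - 2 - (N - 2 - i) = i from by omega] at this
  exact this

lemma E2W (hN : N = 2 * m + 1) (hm : 2 ≤ m) :
    ∀ b ≤ m, Phi N r p m b (b+m) = 0 := by
  intro b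
  induction b with
  | zero =>
    intro _
    have : (0:ℕ) + m = m := by omega
    rw [this]
    exact E0 hN hm (by omega) (by omega)
  | succ b ih =>
    intro hb
    -- first: Phi b (b+m+1) = 0
    have h1 : Phi N r p m b (b+m+1) = 0 := by
      have hstep := stepR (r := r) (p := p) hN hm (i := b) (k := b+m)
        (by omega) (by omega) (by omega)
      rw [show b+m-m = b from by omega] at hstep
      have hV : F N r p b (b+m+1) = Vf N r p m b := rfl
      have hW : F N r p b (b+m) = Wf N r p m b := rfl
      rw [hstep, hV, hW, ih (by omega)]
      ring
    -- then move left endpoint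
    have hstep := stepL (r := r) (p := p) hN hm (k := b) (j := b+m+1)
      (by omega) (by omega)
    have hV : F N r p b (b+m+1) = Vf N r p m b := rfl
    have hW : F N r p (b+1) (b+m+1) = Wf N r p m (b+1) := by
      unfold Wf
      rw [show b+1+m = b+m+1 from by omega]
    rw [h1, hV, hW] at hstep
    have : Phi N r p m (b+1) (b+m+1) = 0 := by linarith
    rw [show b+1+m = b+m+1 from by omega]
    exact this

lemma E2V (hN : N = 2 * m + 1) (hm : 2 ≤ m) {a : ℕ} (ha : a + 1 ≤ m) :
    Phi N r p m a (a+m+1) = 0 := by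
  have hstep := stepR (r := r) (p := p) hN hm (i := a) (k := a+m)
    (by omega) (by omega) (by omega)
  rw [show a+m-m = a from by omega] at hstep
  have hV : F N r p a (a+m+1) = Vf N r p m a := rfl
  have hW : F N r p a (a+m) = Wf N r p m a := rfl
  rw [hstep, hV, hW, E2W hN hm a (by omega)]
  ring

end Equalities

section Ineqs

variable {N m : ℕ} {p : ℝ} {r : Fin N → ℝ}

lemma IRge (hN : N = 2 * m + 1) (hm : 2 ≤ m) (hp : p < 0) (hr : StrictMono r)
    {i k : ℕ} (h1 : m ≤ k) (h2 : k ≤ N - 2) (h3 : i ≤ k - m) :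
    Phi N r p m i k ≤ Phi N r p m i (k+1) := by
  have hN0 : 0 < N := by omega
  rw [stepR hN hm (by omega) h1 h2]
  have hW : Wf N r p m (k-m) = F N r p (k-m) k := by
    unfold Wf
    rw [show k-m+m = k from by omega]
  have hV : Vf N r p m (k-m) = F N r p (k-m) (k+1) := by
    unfold Vf
    rw [show k-m+m+1 = k+1 from by omega]
  rw [hW, hV]
  have c := conv_rpow hp (a := Rf N r k - Rf N r (k-m)) (b := Rf N r k - Rf N r i)
    (d := Rf N r (k+1) - Rf N r k)
    (by have := Rf_lt hr (show k-m < k from by omega) (show k ≤ N-1 from by omega) hN0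
        linarith)
    (by have := Rf_le hr h3 (show k-m ≤ N-1 from by omega) hN0; linarith)
    (by have := Rf_le hr (show k ≤ k+1 from by omega) (show k+1 ≤ N-1 from by omega) hN0
        linarith)
  rw [show Rf N r k - Rf N r (k-m) + (Rf N r (k+1) - Rf N r k)
      = Rf N r (k+1) - Rf N r (k-m) from by ring,
    show Rf N r k - Rf N r i + (Rf N r (k+1) - Rf N r k)
      = Rf N r (k+1) - Rf N r i from by ring] at c
  unfold F
  linarith

lemma IRle (hN : N = 2 * m + 1) (hm : 2 ≤ m) (hp : p < 0) (hr : StrictMono r)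
    {i k : ℕ} (h1 : m ≤ k) (h2 : k ≤ N - 2) (h3 : k - m < i) (h4 : i < k) :
    Phi N r p m i (k+1) ≤ Phi N r p m i k := by
  have hN0 : 0 < N := by omega
  rw [stepR hN hm (by omega) h1 h2]
  have hW : Wf N r p m (k-m) = F N r p (k-m) k := by
    unfold Wf
    rw [show k-m+m = k from by omega]
  have hV : Vf N r p m (k-m) = F N r p (k-m) (k+1) := by
    unfold Vf
    rw [show k-m+m+1 = k+1 from by omega]
  rw [hW, hV]
  have c := conv_rpow hp (a := Rf N r k - Rf N r i) (b := Rf N r k - Rf N r (k-m))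
    (d := Rf N r (k+1) - Rf N r k)
    (by have := Rf_lt hr h4 (show k ≤ N-1 from by omega) hN0; linarith)
    (by have := Rf_le hr (show k-m ≤ i from by omega) (show i ≤ N-1 from by omega) hN0
        linarith)
    (by have := Rf_le hr (show k ≤ k+1 from by omega) (show k+1 ≤ N-1 from by omega) hN0
        linarith)
  rw [show Rf N r k - Rf N r (k-m) + (Rf N r (k+1) - Rf N r k)
      = Rf N r (k+1) - Rf N r (k-m) from by ring,
    show Rf N r k - Rf N r i + (Rf N r (k+1) - Rf N r k)
      = Rf N r (k+1) - Rf N r i from by ring] at c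
  unfold F
  linarith

lemma ILge (hN : N = 2 * m + 1) (hm : 2 ≤ m) (hp : p < 0) (hr : StrictMono r)
    {k j : ℕ} (hk : k < m) (h1 : k + m + 1 ≤ j) (h2 : j ≤ N - 1) :
    Phi N r p m (k+1) j ≤ Phi N r p m k j := by
  have hN0 : 0 < N := by omega
  rw [stepL hN hm (by omega) hk]
  have hW : Wf N r p m (k+1) = F N r p (k+1) (k+m+1) := by
    unfold Wf
    rw [show k+1+m = k+m+1 from by omega]
  rw [hW]
  have hV : Vf N r p m k = F N r p k (k+m+1) := rfl
  rw [hV]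
  have c := conv_rpow hp (a := Rf N r (k+m+1) - Rf N r (k+1)) (b := Rf N r j - Rf N r (k+1))
    (d := Rf N r (k+1) - Rf N r k)
    (by have := Rf_lt hr (show k+1 < k+m+1 from by omega) (show k+m+1 ≤ N-1 from by omega) hN0
        linarith)
    (by have := Rf_le hr h1 (show j ≤ N-1 from h2) hN0; linarith)
    (by have := Rf_le hr (show k ≤ k+1 from by omega) (show k+1 ≤ N-1 from by omega) hN0
        linarith)
  rw [show Rf N r (k+m+1) - Rf N r (k+1) + (Rf N r (k+1) - Rf N r k)
      = Rf N r (k+m+1) - Rf N r k from by ring,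
    show Rf N r j - Rf N r (k+1) + (Rf N r (k+1) - Rf N r k)
      = Rf N r j - Rf N r k from by ring] at c
  unfold F
  linarith

lemma ILle (hN : N = 2 * m + 1) (hm : 2 ≤ m) (hp : p < 0) (hr : StrictMono r)
    {k j : ℕ} (hk : k < m) (h1 : k + 1 < j) (h2 : j ≤ k + m + 1) (h3 : j ≤ N - 1) :
    Phi N r p m k j ≤ Phi N r p m (k+1) j := by
  have hN0 : 0 < N := by omega
  rw [stepL hN hm (by omega) hk]
  have hW : Wf N r p m (k+1) = F N r p (k+1) (k+m+1) := by
    unfold Wf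
    rw [show k+1+m = k+m+1 from by omega]
  rw [hW]
  have hV : Vf N r p m k = F N r p k (k+m+1) := rfl
  rw [hV]
  have c := conv_rpow hp (a := Rf N r j - Rf N r (k+1)) (b := Rf N r (k+m+1) - Rf N r (k+1))
    (d := Rf N r (k+1) - Rf N r k)
    (by have := Rf_lt hr h1 (show j ≤ N-1 from h3) hN0; linarith)
    (by have := Rf_le hr h2 (show k+m+1 ≤ N-1 from by omega) hN0; linarith)
    (by have := Rf_le hr (show k ≤ k+1 from by omega) (show k+1 ≤ N-1 from by omega) hN0
        linarith)
  rw [show Rf N r (k+m+1) - Rf N r (k+1) + (Rf N r (k+1) - Rf N r k)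
      = Rf N r (k+m+1) - Rf N r k from by ring,
    show Rf N r j - Rf N r (k+1) + (Rf N r (k+1) - Rf N r k)
      = Rf N r j - Rf N r k from by ring] at c
  unfold F
  linarith

end Ineqs

section Main

variable {N m : ℕ} {p : ℝ} {r : Fin N → ℝ}

lemma Phi_nonneg (hN : N = 2 * m + 1) (hm : 2 ≤ m) (hp : p < 0) (hr : StrictMono r)
    {i j : ℕ} (hij : i < j) (hj : j ≤ N - 1) : 0 ≤ Phi N r p m i j := by
  -- long intervals
  have long : ∀ d : ℕ, ∀ i j : ℕ, j ≤ N - 1 → j = i + m + 1 + d → 0 ≤ Phi N r p m i j := by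
    intro d
    induction d with
    | zero =>
      intro i j hjN hj
      rw [hj]
      rw [show i + m + 1 + 0 = i + m + 1 from by omega]
      rw [E2V hN hm (by omega)]
    | succ d ih =>
      intro i j hjN hj
      have h0 := ih i (i+m+1+d) (by omega) rfl
      have h1 : Phi N r p m i (i+m+1+d) ≤ Phi N r p m i (i+m+1+d+1) :=
        IRge hN hm hp hr (by omega) (by omega) (by omega)
      rw [hj, show i+m+1+(d+1) = i+m+1+d+1 from by omega]
      linarith
  -- short with j ≥ m : grow right
  have shortA : ∀ s : ℕ, ∀ i j : ℕ, i < j → j ≤ N - 1 → m ≤ j → j + s = i + m →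
      0 ≤ Phi N r p m i j := by
    intro s
    induction s with
    | zero =>
      intro i j hij hjN hmj hs
      have : j = i + m := by omega
      rw [this, E2W hN hm i (by omega)]
    | succ s ih =>
      intro i j hij hjN hmj hs
      rcases eq_or_lt_of_le hjN with he | hlt
      · -- j = N-1 : right corner
        rw [he, E1 hN hm (by omega) (by omega)]
      · have h1 : Phi N r p m i (j+1) ≤ Phi N r p m i j :=
          IRle hN hm hp hr (by omega) (by omega) (by omega) hij
        have h0 := ih i (j+1) (by omega) (by omega) (by omega) (by omega)
        linarith
  -- short with j < m : grow left
  have shortB : ∀ i j : ℕ, i < j → j < m → 0 ≤ Phi N r p m i j := by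
    intro i
    induction i with
    | zero =>
      intro j hij hjm
      rw [E0 hN hm (by omega) (by omega)]
    | succ i ih =>
      intro j hij hjm
      have h1 : Phi N r p m i j ≤ Phi N r p m (i+1) j :=
        ILle hN hm hp hr (by omega) (by omega) (by omega) (by omega)
      have h0 := ih j (by omega) hjm
      linarith
  rcases lt_or_ge j m with hc | hc
  · exact shortB i j hij hc
  · rcases le_or_gt (j - i) m with hd | hd
    · exact shortA (i + m - j) i j hij hj hc (by omega)
    · exact long (j - i - m - 1) i j hj (by omega)

end Main

section Sums

variable {N m : ℕ} {p : ℝ} {r : Fin N → ℝ}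

/-- crossing-number weight of the optimal tour at cut `k`. -/
def Cstar (m k : ℕ) : ℕ := if k < m then 2*(k+1) else 2*(2*m - k)

/-- generic double counting: sum of `Ys` over a family of intervals equals a per-cut sum. -/
lemma swap_sum {ι : Type*} (s : Finset ι) (g h : ι → ℕ) (M : ℕ)
    (hh : ∀ x ∈ s, h x ≤ M) :
    ∑ x ∈ s, Ys N r p m (g x) (h x)
      = ∑ k ∈ range M,
          ((s.filter (fun x => g x ≤ k ∧ k < h x)).card : ℝ) * yf N r p m k := by
  have step1 : ∀ x ∈ s, Ys N r p m (g x) (h x)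
      = ∑ k ∈ range M, (if g x ≤ k ∧ k < h x then yf N r p m k else 0) := by
    intro x hx
    unfold Ys
    rw [Finset.sum_ite, Finset.sum_const_zero, add_zero]
    apply Finset.sum_congr
    · ext k
      simp only [Finset.mem_Ico, Finset.mem_filter, Finset.mem_range]
      have := hh x hx
      omega
    · intros; rfl
  rw [Finset.sum_congr rfl step1, Finset.sum_comm]
  apply Finset.sum_congr rfl
  intro k _
  rw [Finset.sum_ite, Finset.sum_const_zero, add_zero, Finset.sum_const, nsmul_eq_mul]

lemma card_W (hN : N = 2 * m + 1) {k : ℕ} (hk : k ≤ N - 2) :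
    ((range (m+1)).filter (fun b => b ≤ k ∧ k < b + m)).card
      = if k < m then k + 1 else 2*m - k := by
  rcases lt_or_ge k m with h | h
  · have he : (range (m+1)).filter (fun b => b ≤ k ∧ k < b + m)
        = Ico (k + 1 - m) (k + 1) := by
      ext b
      simp only [Finset.mem_filter, Finset.mem_range, Finset.mem_Ico]
      omega
    rw [he, Nat.card_Ico, if_pos h]
    omega
  · have he : (range (m+1)).filter (fun b => b ≤ k ∧ k < b + m)
        = Ico (k + 1 - m) (m + 1) := by
      ext b
      simp only [Finset.mem_filter, Finset.mem_range, Finset.mem_Ico]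
      omega
    rw [he, Nat.card_Ico, if_neg (by omega)]
    omega

lemma card_V (hN : N = 2 * m + 1) {k : ℕ} (hk : k ≤ N - 2) :
    ((range m).filter (fun a => a ≤ k ∧ k < a + m + 1)).card
      = if k < m then k + 1 else 2*m - k := by
  rcases lt_or_ge k m with h | h
  · have he : (range m).filter (fun a => a ≤ k ∧ k < a + m + 1)
        = Ico (k - m) (k + 1) := by
      ext a
      simp only [Finset.mem_filter, Finset.mem_range, Finset.mem_Ico]
      omega
    rw [he, Nat.card_Ico, if_pos h]
    omega
  · have he : (range m).filter (fun a => a ≤ k ∧ k < a + m + 1)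
        = Ico (k - m) m := by
      ext a
      simp only [Finset.mem_filter, Finset.mem_range, Finset.mem_Ico]
      omega
    rw [he, Nat.card_Ico, if_neg (by omega)]
    omega

/-- the σ* energy. -/
noncomputable def Estar : ℝ :=
  (∑ b ∈ range (m+1), Wf N r p m b) + (∑ a ∈ range m, Vf N r p m a)

lemma Estar_eq (hN : N = 2 * m + 1) (hm : 2 ≤ m) :
    Estar (N := N) (r := r) (p := p) (m := m)
      = 2 * (∑ v ∈ range N, uf N r p m v)
        - ∑ k ∈ range (N-1), (Cstar m k : ℝ) * yf N r p m k := by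
  have hW : ∀ b ∈ range (m+1), Wf N r p m b
      = uf N r p m b + uf N r p m (b+m) - Ys N r p m b (b+m) := by
    intro b hb
    simp only [Finset.mem_range] at hb
    have h0 := E2W (r := r) (p := p) hN hm b (by omega)
    have hF : F N r p b (b+m) = Wf N r p m b := rfl
    unfold Phi at h0
    rw [hF] at h0
    linarith
  have hV : ∀ a ∈ range m, Vf N r p m a
      = uf N r p m a + uf N r p m (a+m+1) - Ys N r p m a (a+m+1) := by
    intro a ha
    simp only [Finset.mem_range] at ha
    have h0 := E2V (r := r) (p := p) hN hm (a := a) (by omega)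
    have hF : F N r p a (a+m+1) = Vf N r p m a := rfl
    unfold Phi at h0
    rw [hF] at h0
    linarith
  unfold Estar
  rw [Finset.sum_congr rfl hW, Finset.sum_congr rfl hV]
  rw [Finset.sum_sub_distrib, Finset.sum_sub_distrib, Finset.sum_add_distrib,
    Finset.sum_add_distrib]
  -- u bookkeeping
  have hu1 : ∑ b ∈ range (m+1), uf N r p m (b+m) = ∑ v ∈ Ico m N, uf N r p m v := by
    rw [Finset.sum_Ico_eq_sum_range, show N - m = m + 1 from by omega]
    apply Finset.sum_congr rfl
    intro b _
    rw [Nat.add_comm m b]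
  have hu2 : ∑ a ∈ range m, uf N r p m (a+m+1) = ∑ v ∈ Ico (m+1) N, uf N r p m v := by
    rw [Finset.sum_Ico_eq_sum_range, show N - (m+1) = m from by omega]
    apply Finset.sum_congr rfl
    intro a _
    rw [show m+1+a = a+m+1 from by omega]
  have hu3 : ∑ b ∈ range (m+1), uf N r p m b = ∑ v ∈ Ico 0 (m+1), uf N r p m v := by
    rw [Finset.range_eq_Ico]
  have hu4 : ∑ a ∈ range m, uf N r p m a = ∑ v ∈ Ico 0 m, uf N r p m v := by
    rw [Finset.range_eq_Ico]
  have hsplit1 : ∑ v ∈ Ico 0 (m+1), uf N r p m v + ∑ v ∈ Ico (m+1) N, uf N r p m v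
      = ∑ v ∈ range N, uf N r p m v := by
    rw [Finset.range_eq_Ico]
    exact Finset.sum_Ico_consecutive _ (by omega) (by omega)
  have hsplit2 : ∑ v ∈ Ico 0 m, uf N r p m v + ∑ v ∈ Ico m N, uf N r p m v
      = ∑ v ∈ range N, uf N r p m v := by
    rw [Finset.range_eq_Ico]
    exact Finset.sum_Ico_consecutive _ (by omega) (by omega)
  -- Ys bookkeeping
  have hy1 : ∑ b ∈ range (m+1), Ys N r p m b (b+m)
      = ∑ k ∈ range (N-1),
          (((range (m+1)).filter (fun x => x ≤ k ∧ k < x + m)).card : ℝ)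
            * yf N r p m k := by
    have := swap_sum (N := N) (r := r) (p := p) (m := m) (range (m+1))
      (fun b => b) (fun b => b + m) (N-1)
      (by intro x hx
          simp only [Finset.mem_range] at hx
          show x + m ≤ N - 1
          omega)
    simpa using this
  have hy2 : ∑ a ∈ range m, Ys N r p m a (a+m+1)
      = ∑ k ∈ range (N-1),
          (((range m).filter (fun x => x ≤ k ∧ k < x + m + 1)).card : ℝ)
            * yf N r p m k := by
    have := swap_sum (N := N) (r := r) (p := p) (m := m) (range m)
      (fun a => a) (fun a => a + m + 1) (N-1)
      (by intro x hx
          simp only [Finset.mem_range] at hx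
          show x + m + 1 ≤ N - 1
          omega)
    simpa using this
  have hcards : ∑ k ∈ range (N-1),
        (((range (m+1)).filter (fun x => x ≤ k ∧ k < x + m)).card : ℝ) * yf N r p m k
      + ∑ k ∈ range (N-1),
        (((range m).filter (fun x => x ≤ k ∧ k < x + m + 1)).card : ℝ) * yf N r p m k
      = ∑ k ∈ range (N-1), (Cstar m k : ℝ) * yf N r p m k := by
    rw [← Finset.sum_add_distrib]
    apply Finset.sum_congr rfl
    intro k hk
    simp only [Finset.mem_range] at hk
    rw [card_W hN (by omega), card_V hN (by omega)]
    have : Cstar m k = (if k < m then k+1 else 2*m - k) + (if k < m then k+1 else 2*m - k) := by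
      unfold Cstar
      split_ifs <;> omega
    rw [this]
    push_cast
    ring
  rw [hy1, hy2, hu1, hu2, hu3, hu4]
  linarith [hcards, hsplit1, hsplit2]

end Sums

section Tour

variable {N m : ℕ} {p : ℝ} {r : Fin N → ℝ}

lemma card_filter_perm (σ : Equiv.Perm (Fin N)) (P : Fin N → Prop) [DecidablePred P] :
    ((univ : Finset (Fin N)).filter (fun x => P (σ x))).card
      = ((univ : Finset (Fin N)).filter P).card := by
  apply Finset.card_bij' (fun x _ => σ x) (fun y _ => σ.symm y)
  · intro a ha
    simp only [Finset.mem_filter, Finset.mem_univ, true_and] at ha ⊢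
    exact ha
  · intro a ha
    simp only [Finset.mem_filter, Finset.mem_univ, true_and] at ha ⊢
    simpa using ha
  · intro a _
    simp
  · intro a _
    simp

lemma count_le (hN0 : 0 < N) {k : ℕ} (hk : k ≤ N - 1) :
    ((univ : Finset (Fin N)).filter (fun v : Fin N => v.val ≤ k)).card = k + 1 := by
  have e : ((univ : Finset (Fin N)).filter (fun v : Fin N => v.val ≤ k)).card
      = (range (k+1)).card := by
    apply Finset.card_nbij' (fun v : Fin N => v.val)
      (fun n : ℕ => (⟨n % N, Nat.mod_lt n hN0⟩ : Fin N))
    · intro a ha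
      simp only [Finset.mem_coe, Finset.mem_filter, Finset.mem_univ, true_and] at ha
      simp only [Finset.mem_coe, Finset.mem_range]
      omega
    · intro n hn
      simp only [Finset.mem_coe, Finset.mem_range] at hn
      simp only [Finset.mem_coe, Finset.mem_filter, Finset.mem_univ, true_and]
      rw [Nat.mod_eq_of_lt (by omega)]
      omega
    · intro a ha
      apply Fin.ext
      simp [Nat.mod_eq_of_lt a.isLt]
    · intro n hn
      simp only [Finset.mem_coe, Finset.mem_range] at hn
      simp only
      rw [Nat.mod_eq_of_lt (by omega)]
  rw [e, Finset.card_range]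

lemma count_gt (hN0 : 0 < N) {k : ℕ} (hk : k ≤ N - 1) :
    ((univ : Finset (Fin N)).filter (fun v : Fin N => k < v.val)).card = N - (k + 1) := by
  have h1 := Finset.card_filter_add_card_filter_not
    (s := (univ : Finset (Fin N))) (p := fun v : Fin N => v.val ≤ k)
  have h2 : ((univ : Finset (Fin N)).filter (fun v : Fin N => ¬ v.val ≤ k)).card
      = ((univ : Finset (Fin N)).filter (fun v : Fin N => k < v.val)).card := by
    apply congrArg
    apply Finset.filter_congr
    intro x _
    simp [Nat.not_le]
  have h3 := count_le hN0 hk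
  simp only [Finset.card_univ, Fintype.card_fin] at h1
  omega

lemma fin_succ_ne [NeZero N] (hN5 : 5 ≤ N) (x : Fin N) : x ≠ x + 1 := by
  have hx1 : (x + 1 : Fin N).val = (x.val + 1) % N := by
    rw [Fin.add_def, Fin.val_one', Nat.mod_eq_of_lt (show 1 < N from by omega)]
  intro h2
  have h3 : x.val = (x.val + 1) % N := by
    conv_lhs => rw [h2]
    rw [hx1]
  have hlt := x.isLt
  rcases Nat.lt_or_ge (x.val + 1) N with hc | hc
  · rw [Nat.mod_eq_of_lt hc] at h3
    omega
  · have he : x.val + 1 = N := by omega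
    rw [he, Nat.mod_self] at h3
    omega

lemma crossing_bound [NeZero N] (hN : N = 2 * m + 1) (hm : 2 ≤ m) (σ : Equiv.Perm (Fin N))
    {k : ℕ} (hk : k ≤ N - 2) :
    ((univ : Finset (Fin N)).filter
        (fun x => min (σ x).val (σ (x+1)).val ≤ k ∧ k < max (σ x).val (σ (x+1)).val)).card
      ≤ Cstar m k := by
  have hN0 : 0 < N := by omega
  rcases lt_or_ge k m with h | h
  · have hsub : (univ : Finset (Fin N)).filter
          (fun x => min (σ x).val (σ (x+1)).val ≤ k ∧ k < max (σ x).val (σ (x+1)).val)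
        ⊆ ((univ : Finset (Fin N)).filter (fun x => (σ x).val ≤ k))
          ∪ ((univ : Finset (Fin N)).filter (fun x => (σ (x+1)).val ≤ k)) := by
      intro x hx
      simp only [Finset.mem_filter, Finset.mem_univ, true_and, Finset.mem_union,
        min_le_iff, lt_max_iff] at hx ⊢
      tauto
    have hc1 : ((univ : Finset (Fin N)).filter (fun x => (σ x).val ≤ k)).card = k + 1 := by
      rw [card_filter_perm σ (fun v => v.val ≤ k)]
      exact count_le hN0 (by omega)
    have hc2 : ((univ : Finset (Fin N)).filter (fun x => (σ (x+1)).val ≤ k)).card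
        = k + 1 := by
      rw [show ((univ : Finset (Fin N)).filter (fun x => (σ (x+1)).val ≤ k))
          = ((univ : Finset (Fin N)).filter
              (fun x => ((((Equiv.addRight (1 : Fin N)).trans σ) x)).val ≤ k)) from rfl,
        card_filter_perm _ (fun v => v.val ≤ k)]
      exact count_le hN0 (by omega)
    have hle1 := Finset.card_le_card hsub
    have hle2 := Finset.card_union_le
      ((univ : Finset (Fin N)).filter (fun x => (σ x).val ≤ k))
      ((univ : Finset (Fin N)).filter (fun x => (σ (x+1)).val ≤ k))
    unfold Cstar
    rw [if_pos h]
    omega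
  · have hsub : (univ : Finset (Fin N)).filter
          (fun x => min (σ x).val (σ (x+1)).val ≤ k ∧ k < max (σ x).val (σ (x+1)).val)
        ⊆ ((univ : Finset (Fin N)).filter (fun x => k < (σ x).val))
          ∪ ((univ : Finset (Fin N)).filter (fun x => k < (σ (x+1)).val)) := by
      intro x hx
      simp only [Finset.mem_filter, Finset.mem_univ, true_and, Finset.mem_union,
        min_le_iff, lt_max_iff] at hx ⊢
      tauto
    have hc1 : ((univ : Finset (Fin N)).filter (fun x => k < (σ x).val)).card
        = N - (k+1) := by
      rw [card_filter_perm σ (fun v => k < v.val)]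
      exact count_gt hN0 (by omega)
    have hc2 : ((univ : Finset (Fin N)).filter (fun x => k < (σ (x+1)).val)).card
        = N - (k+1) := by
      rw [show ((univ : Finset (Fin N)).filter (fun x => k < (σ (x+1)).val))
          = ((univ : Finset (Fin N)).filter
              (fun x => k < ((((Equiv.addRight (1 : Fin N)).trans σ) x)).val)) from rfl,
        card_filter_perm _ (fun v => k < v.val)]
      exact count_gt hN0 (by omega)
    have hle1 := Finset.card_le_card hsub
    have hle2 := Finset.card_union_le
      ((univ : Finset (Fin N)).filter (fun x => k < (σ x).val))
      ((univ : Finset (Fin N)).filter (fun x => k < (σ (x+1)).val))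
    unfold Cstar
    rw [if_neg (by omega)]
    omega

lemma tour_bound [NeZero N] (hN : N = 2 * m + 1) (hm : 2 ≤ m) (hp : p < 0)
    (hr : StrictMono r) (σ : Equiv.Perm (Fin N)) :
    2 * (∑ v ∈ range N, uf N r p m v)
      - ∑ k ∈ range (N-1), (Cstar m k : ℝ) * yf N r p m k
    ≤ ∑ x : Fin N, |r (σ (x+1)) - r (σ x)| ^ p := by
  have hN0 : 0 < N := by omega
  set g : Fin N → ℕ := fun x => min (σ x).val (σ (x+1)).val with hg
  set h : Fin N → ℕ := fun x => max (σ x).val (σ (x+1)).val with hh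
  have hne : ∀ x : Fin N, (σ x).val ≠ (σ (x+1)).val := by
    intro x hcon
    exact fin_succ_ne (by omega) x (σ.injective (Fin.ext hcon))
  -- per-edge bound
  have edge : ∀ x : Fin N,
      uf N r p m (σ x).val + uf N r p m (σ (x+1)).val - Ys N r p m (g x) (h x)
        ≤ |r (σ (x+1)) - r (σ x)| ^ p := by
    intro x
    have hglt : g x < h x := min_lt_max.mpr (hne x)
    have hhle : h x ≤ N - 1 := by
      simp only [hh]
      exact Nat.max_le.mpr ⟨by have := (σ x).isLt; omega,
        by have := (σ (x+1)).isLt; omega⟩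
    have hPhi := Phi_nonneg hN hm hp hr hglt hhle
    have hR1 : Rf N r (σ x).val = r (σ x) := by
      rw [Rf, dif_pos (σ x).isLt]
    have hR2 : Rf N r (σ (x+1)).val = r (σ (x+1)) := by
      rw [Rf, dif_pos (σ (x+1)).isLt]
    have habs : |r (σ (x+1)) - r (σ x)| ^ p = F N r p (g x) (h x) := by
      unfold F
      rcases Nat.lt_or_ge (σ x).val (σ (x+1)).val with hc | hc
      · have e1 : g x = (σ x).val := by
          simp only [hg]; exact Nat.min_eq_left (le_of_lt hc)
        have e2 : h x = (σ (x+1)).val := by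
          simp only [hh]; exact Nat.max_eq_right (le_of_lt hc)
        rw [e1, e2, hR1, hR2]
        congr 1
        rw [abs_of_pos]
        have : r (σ x) < r (σ (x+1)) := hr (by exact_mod_cast hc)
        linarith
      · have hc' : (σ (x+1)).val < (σ x).val := by
          have := hne x; omega
        have e1 : g x = (σ (x+1)).val := by
          simp only [hg]; exact Nat.min_eq_right (le_of_lt hc')
        have e2 : h x = (σ x).val := by
          simp only [hh]; exact Nat.max_eq_left (le_of_lt hc')
        rw [e1, e2, hR1, hR2]
        rw [abs_of_neg]
        · congr 1
          ring
        · have : r (σ (x+1)) < r (σ x) := hr (by exact_mod_cast hc')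
          linarith
    rw [habs]
    unfold Phi at hPhi
    have husum : uf N r p m (g x) + uf N r p m (h x)
        = uf N r p m (σ x).val + uf N r p m (σ (x+1)).val := by
      rcases Nat.lt_or_ge (σ x).val (σ (x+1)).val with hc | hc
      · rw [show g x = (σ x).val from by
            simp only [hg]; exact Nat.min_eq_left (le_of_lt hc),
          show h x = (σ (x+1)).val from by
            simp only [hh]; exact Nat.max_eq_right (le_of_lt hc)]
      · have hc' : (σ (x+1)).val < (σ x).val := by
          have := hne x; omega
        rw [show g x = (σ (x+1)).val from by
            simp only [hg]; exact Nat.min_eq_right (le_of_lt hc'),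
          show h x = (σ x).val from by
            simp only [hh]; exact Nat.max_eq_left (le_of_lt hc')]
        ring
    linarith
  -- sum the per-edge bounds
  have hsum := Finset.sum_le_sum (fun x (_ : x ∈ (univ : Finset (Fin N))) => edge x)
  rw [Finset.sum_sub_distrib, Finset.sum_add_distrib] at hsum
  -- u sums
  have hu1 : ∑ x : Fin N, uf N r p m (σ x).val = ∑ v ∈ range N, uf N r p m v := by
    rw [Equiv.sum_comp σ (fun v => uf N r p m v.val)]
    exact Fin.sum_univ_eq_sum_range (fun v => uf N r p m v) N
  have hu2 : ∑ x : Fin N, uf N r p m (σ (x+1)).val = ∑ v ∈ range N, uf N r p m v := by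
    rw [show (∑ x : Fin N, uf N r p m (σ (x+1)).val)
        = ∑ x : Fin N, uf N r p m ((((Equiv.addRight (1 : Fin N)).trans σ) x)).val from rfl,
      Equiv.sum_comp ((Equiv.addRight (1 : Fin N)).trans σ) (fun v => uf N r p m v.val)]
    exact Fin.sum_univ_eq_sum_range (fun v => uf N r p m v) N
  -- Ys sum
  have hys := swap_sum (N := N) (r := r) (p := p) (m := m) (univ : Finset (Fin N))
    g h (N-1) (fun x _ => by
      simp only [hh]
      exact Nat.max_le.mpr ⟨by have := (σ x).isLt; omega,
        by have := (σ (x+1)).isLt; omega⟩)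
  rw [hys, hu1, hu2] at hsum
  -- crossing bound
  have hcb : ∑ k ∈ range (N-1),
        (((univ : Finset (Fin N)).filter (fun x => g x ≤ k ∧ k < h x)).card : ℝ)
          * yf N r p m k
      ≤ ∑ k ∈ range (N-1), (Cstar m k : ℝ) * yf N r p m k := by
    apply Finset.sum_le_sum
    intro k hk
    simp only [Finset.mem_range] at hk
    have hy := y_nonneg (r := r) hN hm hp hr (k := k) (by omega)
    apply mul_le_mul_of_nonneg_right _ hy
    have := crossing_bound hN hm σ (k := k) (by omega)
    exact_mod_cast this
  linarith

end Tour

section LHS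

variable {N m : ℕ} {p : ℝ} {r : Fin N → ℝ}

lemma lhs_eq (hN : N = 2 * m + 1) (hm : 2 ≤ m) (hp : p < 0) (hr : StrictMono r) :
    ∑ i ∈ range N, |Rf N r (((i+1) * (m+1)) % N) - Rf N r ((i * (m+1)) % N)| ^ p
      = Estar (N := N) (r := r) (p := p) (m := m) := by
  have hN0 : 0 < N := by omega
  set T : ℕ → ℝ := fun s => |Rf N r ((s + (m+1)) % N) - Rf N r s| ^ p with hT
  have stepA : ∀ i ∈ range N,
      |Rf N r (((i+1) * (m+1)) % N) - Rf N r ((i * (m+1)) % N)| ^ p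
        = T ((i * (m+1)) % N) := by
    intro i _
    have e : ((i+1) * (m+1)) % N = (((i * (m+1)) % N) + (m+1)) % N := by
      rw [Nat.succ_mul, Nat.add_mod, Nat.mod_eq_of_lt (show m+1 < N from by omega)]
    rw [e]
  rw [Finset.sum_congr rfl stepA]
  have stepB : ∑ i ∈ range N, T ((i * (m+1)) % N) = ∑ s ∈ range N, T s := by
    apply Finset.sum_nbij' (fun i => (i * (m+1)) % N) (fun s => (s * 2) % N)
    · intro a _
      simp only [Finset.mem_range]
      exact Nat.mod_lt _ hN0
    · intro a _
      simp only [Finset.mem_range]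
      exact Nat.mod_lt _ hN0
    · intro a ha
      simp only [Finset.mem_range] at ha
      have e1 : (a * (m+1)) % N * 2 % N = (a * (m+1) * 2) % N := Nat.mod_mul_mod _ _ _
      have e2 : a * (m+1) * 2 = a + a * N := by rw [hN]; ring
      rw [e1, e2, Nat.add_mul_mod_self_right, Nat.mod_eq_of_lt ha]
    · intro a ha
      simp only [Finset.mem_range] at ha
      have e1 : (a * 2) % N * (m+1) % N = (a * 2 * (m+1)) % N := Nat.mod_mul_mod _ _ _
      have e2 : a * 2 * (m+1) = a + a * N := by rw [hN]; ring
      rw [e1, e2, Nat.add_mul_mod_self_right, Nat.mod_eq_of_lt ha]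
    · intro a _
      rfl
  rw [stepB]
  -- split the sum
  rw [Finset.range_eq_Ico, ← Finset.sum_Ico_consecutive _ (Nat.zero_le m) (by omega)]
  have stepV : ∑ s ∈ Ico 0 m, T s = ∑ a ∈ range m, Vf N r p m a := by
    rw [Finset.range_eq_Ico]
    apply Finset.sum_congr rfl
    intro s hs
    simp only [Finset.mem_Ico] at hs
    simp only [hT]
    rw [Nat.mod_eq_of_lt (show s + (m+1) < N from by omega)]
    have hlt := Rf_lt (N := N) hr (show s < s + (m+1) from by omega) (by omega) hN0
    rw [abs_of_pos (by linarith)]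
    unfold Vf F
    rw [show s + (m+1) = s + m + 1 from by omega]
  have stepW : ∑ s ∈ Ico m N, T s = ∑ b ∈ range (m+1), Wf N r p m b := by
    rw [Finset.sum_Ico_eq_sum_range, show N - m = m + 1 from by omega]
    apply Finset.sum_congr rfl
    intro i hi
    simp only [Finset.mem_range] at hi
    simp only [hT]
    have e : (m + i + (m+1)) % N = i := by
      rw [show m + i + (m+1) = N + i from by omega, Nat.add_mod_left,
        Nat.mod_eq_of_lt (by omega)]
    rw [e]
    have hlt := Rf_lt (N := N) hr (show i < m + i from by omega) (by omega) hN0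
    rw [abs_of_neg (by linarith)]
    unfold Wf F
    rw [show i + m = m + i from by omega]
    ring_nf
  rw [stepV, stepW]
  unfold Estar
  ring

end LHS

end Stmt6

/-- For `p < 0`, odd `N ≥ 5` and strictly increasing points `r 0 < ⋯ < r (N-1)`, the
Hamiltonian cycle `σ*(i) = i·(N+1)/2 mod N` (joining each vertex `a` to the vertices
`a + (N-1)/2 mod N` and `a + (N+1)/2 mod N`) is an optimal traveling-salesman tour for
weights `|rᵢ - rⱼ|^p`. -/
theorem stmt_6 (N : ℕ) (hN : 5 ≤ N) (hodd : Odd N) (p : ℝ) (hp : p < 0)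
    (r : Fin N → ℝ) (hr : StrictMono r) (σ : Equiv.Perm (Fin N)) :
    (∑ i ∈ Finset.range N,
        |r ⟨((i + 1) * ((N + 1) / 2)) % N, Nat.mod_lt _ (by omega)⟩
          - r ⟨(i * ((N + 1) / 2)) % N, Nat.mod_lt _ (by omega)⟩| ^ p)
    ≤ ∑ i : Fin N, |r (σ ⟨(i.1 + 1) % N, Nat.mod_lt _ (by omega)⟩) - r (σ i)| ^ p := by
  obtain ⟨m, hm'⟩ := hodd
  have hNm : N = 2 * m + 1 := by omega
  have hm : 2 ≤ m := by omega
  haveI : NeZero N := ⟨by omega⟩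
  have hN0 : 0 < N := by omega
  -- rewrite the LHS
  have hdiv : (N + 1) / 2 = m + 1 := by omega
  have hlhs : (∑ i ∈ Finset.range N,
        |r ⟨((i + 1) * ((N + 1) / 2)) % N, Nat.mod_lt _ (by omega)⟩
          - r ⟨(i * ((N + 1) / 2)) % N, Nat.mod_lt _ (by omega)⟩| ^ p)
      = ∑ i ∈ Finset.range N,
          |Stmt6.Rf N r (((i+1) * (m+1)) % N) - Stmt6.Rf N r ((i * (m+1)) % N)| ^ p := by
    have hmk : ∀ (v : ℕ) (h : v < N), r ⟨v, h⟩ = Stmt6.Rf N r v := by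
      intro v h
      rw [Stmt6.Rf, dif_pos h]
    apply Finset.sum_congr rfl
    intro i _
    simp only [hmk, hdiv]
  -- rewrite the RHS
  have hrhs : (∑ i : Fin N, |r (σ ⟨(i.1 + 1) % N, Nat.mod_lt _ (by omega)⟩) - r (σ i)| ^ p)
      = ∑ x : Fin N, |r (σ (x+1)) - r (σ x)| ^ p := by
    apply Finset.sum_congr rfl
    intro x _
    refine congrArg (fun z : Fin N => |r (σ z) - r (σ x)| ^ p) (Fin.ext ?_)
    show (x.1 + 1) % N = ((x + 1 : Fin N)).val
    rw [Fin.add_def, Fin.val_one', Nat.mod_eq_of_lt (show 1 < N from by omega)]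
  rw [hlhs, hrhs, Stmt6.lhs_eq hNm hm hp hr, Stmt6.Estar_eq hNm hm]
  exact Stmt6.tour_bound hNm hm hp hr σ
end

section
/- Let N ≥ 4 and let σ be a permutation of {1,…,N}, encoding the Hamiltonian cycle with edge set E(σ) = { {σ(i), σ(i+1 mod N)} : 1 ≤ i ≤ N }. Say two edges {a,b} (with a < b) and {c,d} (with c < d) of the cycle cross if a < c < b < d or c < a < d < b. Fix an edge e = {a,b} ∈ E(σ) with a < b, let m₁ = b − a − 1 be the number of vertices strictly between a and b, and let m₂ = N − 2 − m₁. Then the number of edges of E(σ) that cross e is at most 2·min(m₁, m₂) if m₁ ≠ m₂, and at most 2·m₁ − 1 if m₁ = m₂. -/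
open scoped Classical

section Aux

variable {N : ℕ} [NeZero N]

lemma crossAuxA (σ : Equiv.Perm (Fin N)) (P : Fin N → Prop) [DecidablePred P]
    (T : Finset (Fin N)) (h : ∀ j, P j → σ j ∈ T ∨ σ (j + 1) ∈ T) :
    (Finset.univ.filter P).card ≤ 2 * T.card := by
  have hle : (Finset.univ.filter P).card ≤ (T ×ˢ (Finset.univ : Finset Bool)).card := by
    apply Finset.card_le_card_of_injOn
      (fun j => if σ j ∈ T then (σ j, true) else (σ (j + 1), false))
    · intro j hj
      simp only [Finset.mem_coe, Finset.mem_filter, Finset.mem_univ, true_and] at hj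
      by_cases hc : σ j ∈ T
      · simp [hc, Finset.mem_product]
      · simp only [hc, if_false, Finset.mem_coe, Finset.mem_product, Finset.mem_univ, and_true]
        exact (h j hj).resolve_left hc
    · intro j₁ _ j₂ _ heq
      by_cases c₁ : σ j₁ ∈ T <;> by_cases c₂ : σ j₂ ∈ T <;>
        simp only [c₁, c₂, if_true, if_false, Prod.mk.injEq] at heq
      · exact σ.injective heq.1
      · exact absurd heq.2 (by simp)
      · exact absurd heq.2 (by simp)
      · exact add_left_injective 1 (σ.injective heq.1)
  simpa [Finset.card_product, Nat.mul_comm] using hle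

lemma crossAuxB (σ : Equiv.Perm (Fin N)) (P : Fin N → Prop) [DecidablePred P]
    (T : Finset (Fin N)) (h : ∀ j, P j → σ j ∈ T ∨ σ (j + 1) ∈ T)
    (hc : 2 * T.card ≤ (Finset.univ.filter P).card) :
    ∀ v ∈ T, P (σ.symm v) ∧ P (σ.symm v - 1) := by
  intro v hv
  set S := Finset.univ.filter P with hS
  set f : Fin N → Fin N × Bool := fun j => if σ j ∈ T then (σ j, true) else (σ (j + 1), false)
    with hf
  have hmaps : ∀ j (hj : j ∈ S), f j ∈ T ×ˢ (Finset.univ : Finset Bool) := by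
    intro j hj
    simp only [hS, Finset.mem_filter, Finset.mem_univ, true_and] at hj
    by_cases hcon : σ j ∈ T
    · simp [hf, hcon, Finset.mem_product]
    · simp only [hf, hcon, if_false, Finset.mem_product, Finset.mem_univ, and_true]
      exact (h j hj).resolve_left hcon
  have hinj : ∀ j₁ j₂ (h₁ : j₁ ∈ S) (h₂ : j₂ ∈ S), f j₁ = f j₂ → j₁ = j₂ := by
    intro j₁ j₂ _ _ heq
    by_cases c₁ : σ j₁ ∈ T <;> by_cases c₂ : σ j₂ ∈ T <;>
      simp only [hf, c₁, c₂, if_true, if_false, Prod.mk.injEq] at heq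
    · exact σ.injective heq.1
    · exact absurd heq.2 (by simp)
    · exact absurd heq.2 (by simp)
    · exact add_left_injective 1 (σ.injective heq.1)
  have hcard : (T ×ˢ (Finset.univ : Finset Bool)).card ≤ S.card := by
    simpa [Finset.card_product, Nat.mul_comm] using hc
  have hsurj := Finset.surj_on_of_inj_on_of_card_le (fun j (_ : j ∈ S) => f j)
    hmaps hinj hcard
  constructor
  · obtain ⟨j, hjS, hj⟩ := hsurj (v, true) (by simp [Finset.mem_product, hv])
    by_cases hcon : σ j ∈ T
    · simp only [hf, hcon, if_true, Prod.mk.injEq] at hj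
      have hjv : j = σ.symm v := by rw [hj.1]; simp
      rw [← hjv]
      exact (Finset.mem_filter.mp hjS).2
    · simp only [hf, hcon, if_false, Prod.mk.injEq] at hj
      exact absurd hj.2 (by simp)
  · obtain ⟨j, hjS, hj⟩ := hsurj (v, false) (by simp [Finset.mem_product, hv])
    by_cases hcon : σ j ∈ T
    · simp only [hf, hcon, if_true, Prod.mk.injEq] at hj
      exact absurd hj.2 (by simp)
    · simp only [hf, hcon, if_false, Prod.mk.injEq] at hj
      have hjv : j = σ.symm v - 1 := by
        rw [hj.1]; rw [Equiv.symm_apply_apply, add_sub_cancel_right]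
      rw [← hjv]
      exact (Finset.mem_filter.mp hjS).2

omit [NeZero N] in
lemma noCross (a b u v : Fin N) (h : u = a ∨ v = a) :
    ¬((a < min u v ∧ min u v < b ∧ b < max u v) ∨
      (min u v < a ∧ a < max u v ∧ max u v < b)) := by
  rcases le_total u v with huv | huv
  · rw [min_eq_left huv, max_eq_right huv]
    rcases h with rfl | rfl <;>
      · simp only [Fin.lt_def, Fin.le_def] at *; omega
  · rw [min_eq_right huv, max_eq_left huv]
    rcases h with rfl | rfl <;>
      · simp only [Fin.lt_def, Fin.le_def] at *; omega

end Aux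

/-- Bound on the number of edges of a Hamiltonian cycle on `{0,…,N-1}` that cross a fixed
edge `{a,b}` (`a < b`): with `m₁` vertices strictly between `a` and `b` and
`m₂ = N - 2 - m₁`, the number of crossing edges is at most `2·min(m₁,m₂)` when `m₁ ≠ m₂`
and at most `2·m₁ - 1` when `m₁ = m₂`. -/
theorem stmt_7 (N : ℕ) (hN : 4 ≤ N) (σ : Equiv.Perm (Fin N))
    (a b : Fin N) (hab : a < b)
    (he : ∃ i : Fin N,
      ({σ i, σ ⟨(i.1 + 1) % N, Nat.mod_lt _ (by omega)⟩} : Finset (Fin N)) = {a, b}) :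
    (Finset.univ.filter fun j : Fin N =>
        (a < min (σ j) (σ ⟨(j.1 + 1) % N, Nat.mod_lt _ (by omega)⟩) ∧
          min (σ j) (σ ⟨(j.1 + 1) % N, Nat.mod_lt _ (by omega)⟩) < b ∧
          b < max (σ j) (σ ⟨(j.1 + 1) % N, Nat.mod_lt _ (by omega)⟩)) ∨
        (min (σ j) (σ ⟨(j.1 + 1) % N, Nat.mod_lt _ (by omega)⟩) < a ∧
          a < max (σ j) (σ ⟨(j.1 + 1) % N, Nat.mod_lt _ (by omega)⟩) ∧
          max (σ j) (σ ⟨(j.1 + 1) % N, Nat.mod_lt _ (by omega)⟩) < b)).card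
    ≤ if b.1 - a.1 - 1 ≠ N - 2 - (b.1 - a.1 - 1)
        then 2 * min (b.1 - a.1 - 1) (N - 2 - (b.1 - a.1 - 1))
        else 2 * (b.1 - a.1 - 1) - 1 := by
  obtain ⟨M, rfl⟩ : ∃ M, N = M + 4 := ⟨N - 4, by omega⟩
  haveI : NeZero (M + 4) := ⟨by omega⟩
  have key : ∀ (j : Fin (M + 4)) (h : (j.1 + 1) % (M + 4) < M + 4),
      (⟨(j.1 + 1) % (M + 4), h⟩ : Fin (M + 4)) = j + 1 := by
    intro j h
    apply Fin.ext
    rw [Fin.add_def]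
    simp [Fin.val_one]
  simp only [key] at he ⊢
  -- interval sets
  set I : Finset (Fin (M + 4)) := Finset.Ioo a b with hIdef
  set O : Finset (Fin (M + 4)) := Finset.Iio a ∪ Finset.Ioi b with hOdef
  have hI : ∀ j : Fin (M + 4),
      ((a < min (σ j) (σ (j + 1)) ∧ min (σ j) (σ (j + 1)) < b ∧
          b < max (σ j) (σ (j + 1))) ∨
        (min (σ j) (σ (j + 1)) < a ∧ a < max (σ j) (σ (j + 1)) ∧
          max (σ j) (σ (j + 1)) < b)) → σ j ∈ I ∨ σ (j + 1) ∈ I := by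
    intro j hj
    simp only [hIdef, Finset.mem_Ioo]
    rcases le_total (σ j) (σ (j + 1)) with h | h
    · rw [min_eq_left h, max_eq_right h] at hj; tauto
    · rw [min_eq_right h, max_eq_left h] at hj; tauto
  have hO : ∀ j : Fin (M + 4),
      ((a < min (σ j) (σ (j + 1)) ∧ min (σ j) (σ (j + 1)) < b ∧
          b < max (σ j) (σ (j + 1))) ∨
        (min (σ j) (σ (j + 1)) < a ∧ a < max (σ j) (σ (j + 1)) ∧
          max (σ j) (σ (j + 1)) < b)) → σ j ∈ O ∨ σ (j + 1) ∈ O := by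
    intro j hj
    simp only [hOdef, Finset.mem_union, Finset.mem_Iio, Finset.mem_Ioi]
    rcases le_total (σ j) (σ (j + 1)) with h | h
    · rw [min_eq_left h, max_eq_right h] at hj; tauto
    · rw [min_eq_right h, max_eq_left h] at hj; tauto
  have cI : I.card = b.1 - a.1 - 1 := by
    rw [hIdef, Fin.card_Ioo]
  have cO : O.card = (M + 4) - 2 - (b.1 - a.1 - 1) := by
    rw [hOdef, Finset.card_union_of_disjoint, Fin.card_Iio, Fin.card_Ioi]
    · have h1 : a.1 < b.1 := hab
      have h2 : b.1 < M + 4 := b.isLt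
      omega
    · rw [Finset.disjoint_left]
      intro v hv hv'
      simp only [Finset.mem_Iio, Finset.mem_Ioi] at hv hv'
      exact absurd (hv.trans (hab.trans hv')) (lt_irrefl v)
  have bound1 := crossAuxA σ _ I hI
  have bound2 := crossAuxA σ _ O hO
  rw [cI] at bound1
  rw [cO] at bound2
  by_cases hm : b.1 - a.1 - 1 ≠ (M + 4) - 2 - (b.1 - a.1 - 1)
  · rw [if_pos hm]
    omega
  · rw [if_neg hm]
    push_neg at hm
    suffices hne : (Finset.univ.filter fun j : Fin (M + 4) =>
        (a < min (σ j) (σ (j + 1)) ∧ min (σ j) (σ (j + 1)) < b ∧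
          b < max (σ j) (σ (j + 1))) ∨
        (min (σ j) (σ (j + 1)) < a ∧ a < max (σ j) (σ (j + 1)) ∧
          max (σ j) (σ (j + 1)) < b)).card ≠ 2 * (b.1 - a.1 - 1) by
      omega
    intro hS
    have hsI := crossAuxB σ _ I hI (by rw [cI]; omega)
    have hsO := crossAuxB σ _ O hO (by rw [cO]; omega)
    obtain ⟨i, hi⟩ := he
    -- decompose the pair equality
    have one_ne : (1 : Fin (M + 4)) ≠ 0 := by
      intro h
      have h2 : (1 : Fin (M + 4)).val = (0 : Fin (M + 4)).val := by rw [h]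
      simp [Fin.val_one] at h2
    have vone : (1 : Fin (M + 4)).val = 1 := by simp [Fin.val_one]
    have two_ne : (1 + 1 : Fin (M + 4)) ≠ 0 := by
      intro h
      have h2 : ((1 : Fin (M + 4)) + 1).val = (0 : Fin (M + 4)).val := by rw [h]
      have vzero : (0 : Fin (M + 4)).val = 0 := rfl
      rw [Fin.add_def, vone, vzero] at h2
      have h3 : (1 + 1) % (M + 4) = 0 := h2
      rw [Nat.mod_eq_of_lt (show 1 + 1 < M + 4 by omega)] at h3
      omega
    have hne1 : σ i ≠ σ (i + 1) := by
      intro h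
      exact one_ne (left_eq_add.mp (σ.injective h))
    have hpair : (σ i = a ∧ σ (i + 1) = b) ∨ (σ i = b ∧ σ (i + 1) = a) := by
      have h1 : σ i ∈ ({a, b} : Finset (Fin (M + 4))) := by
        rw [← hi]; simp
      have h2 : σ (i + 1) ∈ ({a, b} : Finset (Fin (M + 4))) := by
        rw [← hi]; simp
      simp only [Finset.mem_insert, Finset.mem_singleton] at h1 h2
      have hne2 : a ≠ b := ne_of_lt hab
      rcases h1 with h1 | h1 <;> rcases h2 with h2 | h2
      · exact absurd (h1.trans h2.symm) hne1
      · exact Or.inl ⟨h1, h2⟩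
      · exact Or.inr ⟨h1, h2⟩
      · exact absurd (h1.trans h2.symm) hne1
    rcases hpair with ⟨hA1, hA2⟩ | ⟨hB1, hB2⟩
    · -- σ i = a; other edge at a is at position i - 1
      set x : Fin (M + 4) := σ (i - 1) with hx
      have hedge : σ (i - 1 + 1) = a := by rw [sub_add_cancel]; exact hA1
      have hxa : x ≠ a := by
        intro h
        have := σ.injective (h.trans hA1.symm)
        exact absurd (sub_eq_self.mp this) one_ne
      have hxb : x ≠ b := by
        intro h
        have h2 := σ.injective (h.trans hA2.symm)
        -- i - 1 = i + 1
        have h3 : i = i + (1 + 1) := by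
          conv_lhs => rw [← sub_add_cancel i 1]
          rw [h2, add_assoc]
        exact two_ne (left_eq_add.mp h3)
      have hP : (a < min (σ (i - 1)) (σ (i - 1 + 1)) ∧
            min (σ (i - 1)) (σ (i - 1 + 1)) < b ∧ b < max (σ (i - 1)) (σ (i - 1 + 1))) ∨
          (min (σ (i - 1)) (σ (i - 1 + 1)) < a ∧ a < max (σ (i - 1)) (σ (i - 1 + 1)) ∧
            max (σ (i - 1)) (σ (i - 1 + 1)) < b) := by
        by_cases hcase : a < x ∧ x < b
        · have hmem : x ∈ I := by simp [hIdef, Finset.mem_Ioo, hcase.1, hcase.2]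
          have := (hsI x hmem).1
          have hsymm : σ.symm x = i - 1 := by rw [hx]; simp
          rwa [hsymm] at this
        · have hmem : x ∈ O := by
            simp only [hOdef, Finset.mem_union, Finset.mem_Iio, Finset.mem_Ioi]
            rcases lt_trichotomy x a with h | h | h
            · exact Or.inl h
            · exact absurd h hxa
            · right
              rcases lt_trichotomy x b with h' | h' | h'
              · exact absurd ⟨h, h'⟩ hcase
              · exact absurd h' hxb
              · exact h'
          have := (hsO x hmem).1
          have hsymm : σ.symm x = i - 1 := by rw [hx]; simp
          rwa [hsymm] at this
      exact noCross a b (σ (i - 1)) (σ (i - 1 + 1)) (Or.inr hedge) hP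
    · -- σ (i+1) = a; other edge at a is at position i + 1
      set x : Fin (M + 4) := σ (i + 1 + 1) with hx
      have hxa : x ≠ a := by
        intro h
        have h2 := σ.injective (h.trans hB2.symm)
        exact one_ne (add_eq_left.mp h2)
      have hxb : x ≠ b := by
        intro h
        have h2 := σ.injective (h.trans hB1.symm)
        rw [add_assoc] at h2
        exact two_ne (add_eq_left.mp h2)
      have hsub : σ.symm x - 1 = i + 1 := by
        rw [hx, Equiv.symm_apply_apply, add_sub_cancel_right]
      have hP : (a < min (σ (i + 1)) (σ (i + 1 + 1)) ∧
            min (σ (i + 1)) (σ (i + 1 + 1)) < b ∧ b < max (σ (i + 1)) (σ (i + 1 + 1))) ∨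
          (min (σ (i + 1)) (σ (i + 1 + 1)) < a ∧ a < max (σ (i + 1)) (σ (i + 1 + 1)) ∧
            max (σ (i + 1)) (σ (i + 1 + 1)) < b) := by
        by_cases hcase : a < x ∧ x < b
        · have hmem : x ∈ I := by simp [hIdef, Finset.mem_Ioo, hcase.1, hcase.2]
          have := (hsI x hmem).2
          rwa [hsub] at this
        · have hmem : x ∈ O := by
            simp only [hOdef, Finset.mem_union, Finset.mem_Iio, Finset.mem_Ioi]
            rcases lt_trichotomy x a with h | h | h
            · exact Or.inl h
            · exact absurd h hxa
            · right
              rcases lt_trichotomy x b with h' | h' | h'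
              · exact absurd ⟨h, h'⟩ hcase
              · exact absurd h' hxb
              · exact h'
          have := (hsO x hmem).2
          rwa [hsub] at this
      exact noCross a b (σ (i + 1)) (σ (i + 1 + 1)) (Or.inl hB2) hP
end

section
/- Let V be a finite set with |V| = 2N vertices and let w assign to each unordered pair of distinct vertices of V a nonnegative real weight. For 0 ≤ k ≤ N, a k-matching is a set of k pairwise vertex-disjoint unordered pairs of distinct vertices of V, and let E_k denote the minimum, over all k-matchings M, of Σ_{e ∈ M} w(e) (with E₀ = 0). Then for every 1 ≤ n ≤ N − 1, E_{n+1} − E_n ≥ E_n − E_{n−1}; that is, the optimal partial-matching cost is a convex function of the matching size. -/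
section Aux

open Finset

variable {V : Type*} [DecidableEq V]

/-- auxiliary: matching predicate without the cardinality constraint -/
def IsMch (M : Finset (Sym2 V)) : Prop :=
  (∀ e ∈ M, ¬ e.IsDiag) ∧
    (M : Set (Sym2 V)).Pairwise (fun e f => ∀ v : V, v ∈ e → v ∉ f)

lemma mch_symm : Symmetric (fun e f : Sym2 V => ∀ v : V, v ∈ e → v ∉ f) :=
  fun e f h v hvf hve => h v hve hvf

lemma isMch_subset {M A : Finset (Sym2 V)} (h : IsMch M) (hA : A ⊆ M) : IsMch A :=
  ⟨fun e he => h.1 e (hA he), h.2.mono (by exact_mod_cast hA)⟩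

/-- the two-element vertex set of an edge -/
def eF (e : Sym2 V) : Finset V :=
  Sym2.lift ⟨fun a b => {a, b}, fun a b => Finset.pair_comm a b⟩ e

@[simp] lemma mem_eF {v : V} {e : Sym2 V} : v ∈ eF e ↔ v ∈ e := by
  induction e using Sym2.ind with
  | _ a b => simp [eF, Sym2.mem_iff]

lemma card_eF {e : Sym2 V} (h : ¬ e.IsDiag) : (eF e).card = 2 := by
  induction e using Sym2.ind with
  | _ a b =>
    rw [Sym2.mk_isDiag_iff] at h
    simp [eF, Finset.card_insert_of_notMem, h]

/-- vertices covered by a set of edges -/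
def cov (M : Finset (Sym2 V)) : Finset V := M.biUnion eF

lemma mem_cov {v : V} {M : Finset (Sym2 V)} : v ∈ cov M ↔ ∃ e ∈ M, v ∈ e := by
  simp [cov]

lemma card_cov {M : Finset (Sym2 V)} (h : IsMch M) : (cov M).card = 2 * M.card := by
  rw [cov, Finset.card_biUnion]
  · rw [Finset.sum_congr rfl fun e he => card_eF (h.1 e he)]
    simp [Finset.sum_const, mul_comm]
  · intro x hx y hy hxy
    simp only [Finset.disjoint_left]
    intro a hax hay
    exact h.2 hx hy hxy a (mem_eF.mp hax) (mem_eF.mp hay)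

lemma exists_kmatching [Fintype V] :
    ∀ k : ℕ, 2 * k ≤ Fintype.card V →
      ∃ M : Finset (Sym2 V), M.card = k ∧ IsMch M := by
  intro k
  induction k with
  | zero => intro _; exact ⟨∅, by simp [IsMch]⟩
  | succ k ih =>
    intro hk
    obtain ⟨M, hcard, hM⟩ := ih (by omega)
    have hcov : (cov M).card = 2 * k := by rw [card_cov hM, hcard]
    have h1 : 2 ≤ (Finset.univ \ cov M).card := by
      rw [Finset.card_sdiff_of_subset (Finset.subset_univ _), Finset.card_univ, hcov]; omega
    obtain ⟨a, ha⟩ := Finset.card_pos.mp (by omega : 0 < (Finset.univ \ cov M).card)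
    have h2 : 0 < ((Finset.univ \ cov M).erase a).card := by
      rw [Finset.card_erase_of_mem ha]; omega
    obtain ⟨b, hb⟩ := Finset.card_pos.mp h2
    have hab : a ≠ b := fun h => (Finset.mem_erase.mp hb).1 h.symm
    have haM : a ∉ cov M := (Finset.mem_sdiff.mp ha).2
    have hbM : b ∉ cov M := (Finset.mem_sdiff.mp (Finset.mem_erase.mp hb).2).2
    have hnm : s(a, b) ∉ M := fun h => haM (mem_cov.mpr ⟨_, h, by simp⟩)
    refine ⟨insert s(a, b) M, ?_, ?_, ?_⟩
    · rw [Finset.card_insert_of_notMem hnm, hcard]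
    · intro e he
      rcases Finset.mem_insert.mp he with rfl | he
      · simpa [Sym2.mk_isDiag_iff] using hab
      · exact hM.1 e he
    · rw [Finset.coe_insert]
      haveI : Std.Symm (fun e f : Sym2 V => ∀ v : V, v ∈ e → v ∉ f) := ⟨fun _ _ h => mch_symm h⟩
      refine Set.pairwise_insert_of_symm.mpr ⟨hM.2, ?_⟩
      intro f hf _ v hv
      rcases Sym2.mem_iff.mp hv with rfl | rfl
      · exact fun hvf => haM (mem_cov.mpr ⟨f, hf, hvf⟩)
      · exact fun hvf => hbM (mem_cov.mpr ⟨f, hf, hvf⟩)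

lemma ms_helper {A B : Finset (Sym2 V)} {e f : Sym2 V} (he : e ∈ B) (hf : f ∈ A) :
    e ::ₘ f ::ₘ ((A.erase f).val + (B.erase e).val) = A.val + B.val := by
  rw [Finset.erase_val, Finset.erase_val]
  have h1 : f ::ₘ (A.val.erase f + B.val.erase e)
      = A.val + B.val.erase e := by
    rw [← Multiset.cons_add, Multiset.cons_erase (by exact_mod_cast hf)]
  calc e ::ₘ f ::ₘ (A.val.erase f + B.val.erase e)
      = e ::ₘ (A.val + B.val.erase e) := by rw [h1]
    _ = A.val + B.val := by
        rw [add_comm, ← Multiset.cons_add, Multiset.cons_erase (by exact_mod_cast he),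
          add_comm]

lemma exchange : ∀ (m : ℕ) (A B : Finset (Sym2 V)), A.card = m →
    IsMch A → IsMch B → A.card < B.card →
    ∃ C D : Finset (Sym2 V), IsMch C ∧ IsMch D ∧
      C.card = A.card + 1 ∧ D.card = B.card - 1 ∧ C.val + D.val = A.val + B.val := by
  intro m
  induction m using Nat.strong_induction_on with
  | _ m ih =>
  intro A B hm hA hB hlt
  -- find v covered by B not by A
  have hns : ¬ (cov B ⊆ cov A) := by
    intro hsub
    have := Finset.card_le_card hsub
    rw [card_cov hA, card_cov hB] at this
    omega
  obtain ⟨v, hvB, hvA⟩ := Finset.not_subset.mp hns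
  obtain ⟨e, heB, hve⟩ := mem_cov.mp hvB
  obtain ⟨u, rfl⟩ := Sym2.mem_iff_exists.mp hve
  have hvu : v ≠ u := by
    have := hB.1 _ heB; rwa [Sym2.mk_isDiag_iff] at this
  have hvA' : ∀ g ∈ A, v ∉ g := fun g hg hv => hvA (mem_cov.mpr ⟨g, hg, hv⟩)
  by_cases hu : u ∈ cov A
  · -- u covered by A via f = s(u,x)
    obtain ⟨f, hfA, huf⟩ := mem_cov.mp hu
    obtain ⟨x, rfl⟩ := Sym2.mem_iff_exists.mp huf
    have hux : u ≠ x := by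
      have := hA.1 _ hfA; rwa [Sym2.mk_isDiag_iff] at this
    have hef : s(v, u) ≠ s(u, x) := by
      intro h
      exact hvA' _ hfA (h ▸ Sym2.mem_mk_left v u)
    have hApos : 0 < A.card := Finset.card_pos.mpr ⟨_, hfA⟩
    set A₀ := A.erase s(u, x) with hA₀
    set B₀ := B.erase s(v, u) with hB₀
    have hA₀c : A₀.card = A.card - 1 := Finset.card_erase_of_mem hfA
    have hB₀c : B₀.card = B.card - 1 := Finset.card_erase_of_mem heB
    have hA₀m : IsMch A₀ := isMch_subset hA (Finset.erase_subset _ _)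
    have hB₀m : IsMch B₀ := isMch_subset hB (Finset.erase_subset _ _)
    obtain ⟨C₀, D₀, hC₀m, hD₀m, hC₀c, hD₀c, hms⟩ :=
      ih (m - 1) (by omega) A₀ B₀ (by omega) hA₀m hB₀m (by omega)
    -- membership transfer
    have key : ∀ g : Sym2 V, g ∈ C₀ ∨ g ∈ D₀ → g ∈ A₀ ∨ g ∈ B₀ := by
      intro g hg
      have : g ∈ C₀.val + D₀.val := by
        rcases hg with h | h
        · exact Multiset.mem_add.mpr (Or.inl (by exact_mod_cast h))
        · exact Multiset.mem_add.mpr (Or.inr (by exact_mod_cast h))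
      rw [hms] at this
      rcases Multiset.mem_add.mp this with h | h
      · exact Or.inl (by exact_mod_cast h)
      · exact Or.inr (by exact_mod_cast h)
    -- v, u not covered by C₀ or D₀
    have hvfree : ∀ g : Sym2 V, g ∈ C₀ ∨ g ∈ D₀ → v ∉ g := by
      intro g hg hvg
      rcases key g hg with h | h
      · exact hvA' g (Finset.erase_subset _ _ h) hvg
      · obtain ⟨hgne, hgB⟩ := Finset.mem_erase.mp h
        exact hB.2 heB hgB (Ne.symm hgne) v (Sym2.mem_mk_left v u) hvg
    have hufree : ∀ g : Sym2 V, g ∈ C₀ ∨ g ∈ D₀ → u ∉ g := by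
      intro g hg hug
      rcases key g hg with h | h
      · obtain ⟨hgne, hgA⟩ := Finset.mem_erase.mp h
        exact hA.2 hfA hgA (Ne.symm hgne) u (Sym2.mem_mk_left u x) hug
      · obtain ⟨hgne, hgB⟩ := Finset.mem_erase.mp h
        exact hB.2 heB hgB (Ne.symm hgne) u (Sym2.mem_mk_right v u) hug
    -- x covered by at most one of C₀, D₀ and not via A₀
    have hxA₀ : ∀ g ∈ A₀, x ∉ g := by
      intro g hg hxg
      obtain ⟨hgne, hgA⟩ := Finset.mem_erase.mp hg
      exact hA.2 hfA hgA (Ne.symm hgne) x (Sym2.mem_mk_right u x) hxg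
    have hBcard2 : 2 ≤ B.card := by omega
    have hmsfinal : ∀ {C D : Finset (Sym2 V)},
        C.val + D.val = s(v,u) ::ₘ s(u,x) ::ₘ (C₀.val + D₀.val) →
        C.val + D.val = A.val + B.val := by
      intro C D h
      rw [h, hms, hA₀, hB₀, ms_helper heB hfA]
    by_cases hx : x ∈ cov C₀
    · -- x used in C₀ : put e=s(v,u) in C₀, f=s(u,x) in D₀
      have hxD₀ : ∀ g ∈ D₀, x ∉ g := by
        intro g hgD hxg
        obtain ⟨g', hg'C, hxg'⟩ := mem_cov.mp hx
        have hgB : g ∈ B₀ := (key g (Or.inr hgD)).resolve_left (fun h => hxA₀ g h hxg)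
        have hg'B : g' ∈ B₀ := (key g' (Or.inl hg'C)).resolve_left (fun h => hxA₀ g' h hxg')
        have hgg' : g = g' := by
          by_contra hne
          exact hB.2 (Finset.erase_subset _ _ hgB) (Finset.erase_subset _ _ hg'B)
            (fun h => hne (by exact_mod_cast h)) x hxg hxg'
        -- then g has multiplicity 2 in C₀.val + D₀.val but ≤ 1 in A₀.val + B₀.val
        have hgA₀ : g ∉ A₀ := fun h => hxA₀ g h hxg
        have hcount : (C₀.val + D₀.val).count g ≤ 1 := by
          rw [hms, Multiset.count_add]
          have h1 : A₀.val.count g = 0 :=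
            Multiset.count_eq_zero.mpr (by exact_mod_cast hgA₀)
          have h2 : B₀.val.count g ≤ 1 := le_of_eq (Multiset.count_eq_one_of_mem B₀.nodup
            (by exact_mod_cast hgB))
          omega
        have hc1 : 1 ≤ C₀.val.count g := by
          rw [hgg']
          exact Multiset.one_le_count_iff_mem.mpr (by exact_mod_cast hg'C)
        have hc2 : 1 ≤ D₀.val.count g :=
          Multiset.one_le_count_iff_mem.mpr (by exact_mod_cast hgD)
        rw [Multiset.count_add] at hcount
        omega
      have heC₀ : s(v, u) ∉ C₀ := fun h => hvfree _ (Or.inl h) (Sym2.mem_mk_left v u)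
      have hfD₀ : s(u, x) ∉ D₀ := fun h => hufree _ (Or.inr h) (Sym2.mem_mk_left u x)
      refine ⟨insert s(v, u) C₀, insert s(u, x) D₀, ?_, ?_, ?_, ?_, ?_⟩
      · refine ⟨?_, ?_⟩
        · intro g hg
          rcases Finset.mem_insert.mp hg with rfl | hg
          · simpa [Sym2.mk_isDiag_iff] using hvu
          · exact hC₀m.1 g hg
        · rw [Finset.coe_insert]
          haveI : Std.Symm (fun e f : Sym2 V => ∀ v : V, v ∈ e → v ∉ f) := ⟨fun _ _ h => mch_symm h⟩
          refine Set.pairwise_insert_of_symm.mpr ⟨hC₀m.2, ?_⟩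
          intro g hg _ y hy
          rcases Sym2.mem_iff.mp hy with rfl | rfl
          · exact fun hyg => hvfree g (Or.inl hg) hyg
          · exact fun hyg => hufree g (Or.inl hg) hyg
      · refine ⟨?_, ?_⟩
        · intro g hg
          rcases Finset.mem_insert.mp hg with rfl | hg
          · simpa [Sym2.mk_isDiag_iff] using hux
          · exact hD₀m.1 g hg
        · rw [Finset.coe_insert]
          haveI : Std.Symm (fun e f : Sym2 V => ∀ v : V, v ∈ e → v ∉ f) := ⟨fun _ _ h => mch_symm h⟩
          refine Set.pairwise_insert_of_symm.mpr ⟨hD₀m.2, ?_⟩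
          intro g hg _ y hy
          rcases Sym2.mem_iff.mp hy with rfl | rfl
          · exact fun hyg => hufree g (Or.inr hg) hyg
          · exact fun hyg => hxD₀ g hg hyg
      · rw [Finset.card_insert_of_notMem heC₀, hC₀c]; omega
      · rw [Finset.card_insert_of_notMem hfD₀, hD₀c]; omega
      · apply hmsfinal
        rw [Finset.insert_val_of_notMem heC₀, Finset.insert_val_of_notMem hfD₀]
        rw [Multiset.cons_add]
        congr 1
        rw [add_comm, Multiset.cons_add, add_comm]
    · -- x not used in C₀ : put f=s(u,x) in C₀, e=s(v,u) in D₀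
      have hxC₀ : ∀ g ∈ C₀, x ∉ g := fun g hg hxg => hx (mem_cov.mpr ⟨g, hg, hxg⟩)
      have hfC₀ : s(u, x) ∉ C₀ := fun h => hufree _ (Or.inl h) (Sym2.mem_mk_left u x)
      have heD₀ : s(v, u) ∉ D₀ := fun h => hvfree _ (Or.inr h) (Sym2.mem_mk_left v u)
      refine ⟨insert s(u, x) C₀, insert s(v, u) D₀, ?_, ?_, ?_, ?_, ?_⟩
      · refine ⟨?_, ?_⟩
        · intro g hg
          rcases Finset.mem_insert.mp hg with rfl | hg
          · simpa [Sym2.mk_isDiag_iff] using hux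
          · exact hC₀m.1 g hg
        · rw [Finset.coe_insert]
          haveI : Std.Symm (fun e f : Sym2 V => ∀ v : V, v ∈ e → v ∉ f) := ⟨fun _ _ h => mch_symm h⟩
          refine Set.pairwise_insert_of_symm.mpr ⟨hC₀m.2, ?_⟩
          intro g hg _ y hy
          rcases Sym2.mem_iff.mp hy with rfl | rfl
          · exact fun hyg => hufree g (Or.inl hg) hyg
          · exact fun hyg => hxC₀ g hg hyg
      · refine ⟨?_, ?_⟩
        · intro g hg
          rcases Finset.mem_insert.mp hg with rfl | hg
          · simpa [Sym2.mk_isDiag_iff] using hvu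
          · exact hD₀m.1 g hg
        · rw [Finset.coe_insert]
          haveI : Std.Symm (fun e f : Sym2 V => ∀ v : V, v ∈ e → v ∉ f) := ⟨fun _ _ h => mch_symm h⟩
          refine Set.pairwise_insert_of_symm.mpr ⟨hD₀m.2, ?_⟩
          intro g hg _ y hy
          rcases Sym2.mem_iff.mp hy with rfl | rfl
          · exact fun hyg => hvfree g (Or.inr hg) hyg
          · exact fun hyg => hufree g (Or.inr hg) hyg
      · rw [Finset.card_insert_of_notMem hfC₀, hC₀c]; omega
      · rw [Finset.card_insert_of_notMem heD₀, hD₀c]; omega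
      · apply hmsfinal
        rw [Finset.insert_val_of_notMem hfC₀, Finset.insert_val_of_notMem heD₀]
        rw [Multiset.cons_add, add_comm, Multiset.cons_add, add_comm,
          Multiset.cons_swap]
  · -- u not covered by A : direct augmentation
    have huA' : ∀ g ∈ A, u ∉ g := fun g hg hug => hu (mem_cov.mpr ⟨g, hg, hug⟩)
    have heA : s(v, u) ∉ A := fun h => hvA' _ h (Sym2.mem_mk_left v u)
    refine ⟨insert s(v, u) A, B.erase s(v, u), ?_, ?_, ?_, ?_, ?_⟩
    · refine ⟨?_, ?_⟩
      · intro g hg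
        rcases Finset.mem_insert.mp hg with rfl | hg
        · simpa [Sym2.mk_isDiag_iff] using hvu
        · exact hA.1 g hg
      · rw [Finset.coe_insert]
        haveI : Std.Symm (fun e f : Sym2 V => ∀ v : V, v ∈ e → v ∉ f) := ⟨fun _ _ h => mch_symm h⟩
        refine Set.pairwise_insert_of_symm.mpr ⟨hA.2, ?_⟩
        intro g hg _ y hy
        rcases Sym2.mem_iff.mp hy with rfl | rfl
        · exact fun hyg => hvA' g hg hyg
        · exact fun hyg => huA' g hg hyg
    · exact isMch_subset hB (Finset.erase_subset _ _)
    · rw [Finset.card_insert_of_notMem heA]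
    · exact Finset.card_erase_of_mem heB
    · rw [Finset.insert_val_of_notMem heA, Finset.erase_val, Multiset.cons_add,
        add_comm, ← Multiset.cons_add, Multiset.cons_erase (by exact_mod_cast heB),
        add_comm]

lemma sum_val_eq {C D A B : Finset (Sym2 V)} (w : Sym2 V → ℝ)
    (h : C.val + D.val = A.val + B.val) :
    ∑ e ∈ C, w e + ∑ e ∈ D, w e = ∑ e ∈ A, w e + ∑ e ∈ B, w e := by
  have h2 : ((C.val + D.val).map w).sum = ((A.val + B.val).map w).sum := by rw [h]
  rw [Multiset.map_add, Multiset.sum_add, Multiset.map_add, Multiset.sum_add] at h2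
  rw [Finset.sum_eq_multiset_sum, Finset.sum_eq_multiset_sum,
    Finset.sum_eq_multiset_sum, Finset.sum_eq_multiset_sum]
  exact h2


end Aux


/-- `IsKMatching k M` means `M` is a set of `k` pairwise vertex-disjoint edges
(unordered pairs of distinct vertices) of the complete graph on `V`. -/
def IsKMatching {V : Type*} [DecidableEq V] (k : ℕ) (M : Finset (Sym2 V)) : Prop :=
  M.card = k ∧ (∀ e ∈ M, ¬ e.IsDiag) ∧
    (M : Set (Sym2 V)).Pairwise (fun e f => ∀ v : V, v ∈ e → v ∉ f)

/-- Convexity of the optimal partial-matching cost: on a complete graph with `2N`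
vertices and nonnegative edge weights, letting `E k` be the minimum cost of a matching
of `k` disjoint edges, we have `E (n+1) - E n ≥ E n - E (n-1)` for `1 ≤ n ≤ N-1`. -/
theorem stmt_16 {V : Type*} [Fintype V] [DecidableEq V] (N : ℕ)
    (hV : Fintype.card V = 2 * N)
    (w : Sym2 V → ℝ) (hw : ∀ e, 0 ≤ w e)
    (E : ℕ → ℝ)
    (hE : ∀ k, E k = sInf {c : ℝ |
      ∃ M : Finset (Sym2 V), IsKMatching k M ∧ c = ∑ e ∈ M, w e})
    (n : ℕ) (hn : 1 ≤ n) (hnN : n ≤ N - 1) :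
    E n - E (n - 1) ≤ E (n + 1) - E n := by
  set S : ℕ → Set ℝ := fun k => {c : ℝ |
      ∃ M : Finset (Sym2 V), IsKMatching k M ∧ c = ∑ e ∈ M, w e} with hS
  have hbdd : ∀ k, BddBelow (S k) := by
    rintro k
    exact ⟨0, by rintro c ⟨M, hM, rfl⟩; exact Finset.sum_nonneg fun e _ => hw e⟩
  have hfin : ∀ k, (S k).Finite := by
    intro k
    have : S k ⊆ (fun M : Finset (Sym2 V) => ∑ e ∈ M, w e) '' Set.univ := by
      rintro c ⟨M, _, rfl⟩; exact ⟨M, trivial, rfl⟩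
    exact Set.Finite.subset (Set.finite_univ.image _) this
  have hne : ∀ k, 2 * k ≤ Fintype.card V → (S k).Nonempty := by
    intro k hk
    obtain ⟨M, hc, hM⟩ := exists_kmatching k hk
    exact ⟨∑ e ∈ M, w e, M, ⟨hc, hM.1, hM.2⟩, rfl⟩
  have hNn : n + 1 ≤ N := by omega
  have hA := (hne (n - 1) (by omega)).csInf_mem (hfin (n - 1))
  have hB := (hne (n + 1) (by omega)).csInf_mem (hfin (n + 1))
  obtain ⟨A, hAm, hAs⟩ := hA
  obtain ⟨B, hBm, hBs⟩ := hB
  obtain ⟨C, D, hCm, hDm, hCc, hDc, hms⟩ :=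
    exchange (n - 1) A B hAm.1 ⟨hAm.2.1, hAm.2.2⟩ ⟨hBm.2.1, hBm.2.2⟩
      (by rw [hAm.1, hBm.1]; omega)
  rw [hAm.1] at hCc
  rw [hBm.1] at hDc
  have hCn : C.card = n := by omega
  have hDn : D.card = n := by omega
  have hEnC : E n ≤ ∑ e ∈ C, w e := by
    rw [hE n]
    exact csInf_le (hbdd n) ⟨C, ⟨hCn, hCm.1, hCm.2⟩, rfl⟩
  have hEnD : E n ≤ ∑ e ∈ D, w e := by
    rw [hE n]
    exact csInf_le (hbdd n) ⟨D, ⟨hDn, hDm.1, hDm.2⟩, rfl⟩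
  have hsum := sum_val_eq w hms
  have hEA : E (n - 1) = ∑ e ∈ A, w e := by rw [hE (n - 1)]; exact hAs
  have hEB : E (n + 1) = ∑ e ∈ B, w e := by rw [hE (n + 1)]; exact hBs
  linarith
end

section
/- Let V be a finite set with |V| = 2N vertices and let w assign to each unordered pair of distinct vertices of V a nonnegative real weight. For 0 ≤ k ≤ N, a k-matching is a set of k pairwise vertex-disjoint unordered pairs of distinct vertices of V, with total weight Σ_{e ∈ M} w(e). Fix 1 ≤ n ≤ N − 1 and suppose that the minimum-weight n-matching Mₙ and the minimum-weight (n+1)-matching M_{n+1} are each unique (the minimum is attained by exactly one matching of the respective size). Then every vertex covered by Mₙ is also covered by M_{n+1}; i.e., the set of vertices used by the optimal n-matching is contained in the set of vertices used by the optimal (n+1)-matching. -/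
open scoped Classical
set_option linter.unusedSectionVars false

namespace Stmt17Aux

variable {V : Type*} [Fintype V] [DecidableEq V]

noncomputable def verts (S : Finset (Sym2 V)) : Finset V :=
  Finset.univ.filter (fun v => ∃ e ∈ S, v ∈ e)

lemma mem_verts {S : Finset (Sym2 V)} {v : V} : v ∈ verts S ↔ ∃ e ∈ S, v ∈ e := by
  simp [verts]

lemma verts_mono {S T : Finset (Sym2 V)} (h : S ⊆ T) : verts S ⊆ verts T := by
  intro v hv
  rw [mem_verts] at hv ⊢
  obtain ⟨e, he, hve⟩ := hv
  exact ⟨e, h he, hve⟩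

def reachN (D : Finset (Sym2 V)) (e1 : Sym2 V) : ℕ → Sym2 V → Prop
  | 0, f => f = e1
  | (k+1), f => reachN D e1 k f ∨ (f ∈ D ∧ ∃ g, reachN D e1 k g ∧ ∃ x : V, x ∈ g ∧ x ∈ f)

lemma reachN_succ_of {D : Finset (Sym2 V)} {e1 f : Sym2 V} {k : ℕ}
    (h : reachN D e1 k f) : reachN D e1 (k+1) f := Or.inl h

lemma reachN_le {D : Finset (Sym2 V)} {e1 f : Sym2 V} {k m : ℕ} (hkm : k ≤ m)
    (h : reachN D e1 k f) : reachN D e1 m f := by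
  induction m with
  | zero => simpa [Nat.le_zero.mp hkm] using h
  | succ m ih =>
    rcases Nat.lt_or_ge k (m+1) with h1 | h1
    · exact reachN_succ_of (ih (by omega))
    · have : k = m + 1 := by omega
      subst this; exact h

lemma reachN_memD {D : Finset (Sym2 V)} {e1 f : Sym2 V} (he : e1 ∈ D) :
    ∀ {k : ℕ}, reachN D e1 k f → f ∈ D := by
  intro k
  induction k generalizing f with
  | zero => intro h; cases h; exact he
  | succ k ih =>
    rintro (h | ⟨hf, _⟩)
    · exact ih h
    · exact hf

noncomputable def Sk (D : Finset (Sym2 V)) (e1 : Sym2 V) (k : ℕ) : Finset (Sym2 V) :=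
  D.filter (reachN D e1 k)

lemma mem_Sk {D : Finset (Sym2 V)} {e1 f : Sym2 V} {k : ℕ} :
    f ∈ Sk D e1 k ↔ f ∈ D ∧ reachN D e1 k f := by simp [Sk]

lemma Sk_mono {D : Finset (Sym2 V)} {e1 : Sym2 V} {k m : ℕ} (h : k ≤ m) :
    Sk D e1 k ⊆ Sk D e1 m := by
  intro f hf
  rw [mem_Sk] at hf ⊢
  exact ⟨hf.1, reachN_le h hf.2⟩

lemma Sk_stab_step {D : Finset (Sym2 V)} {e1 : Sym2 V} (he : e1 ∈ D) {k : ℕ}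
    (h : Sk D e1 k = Sk D e1 (k+1)) : Sk D e1 (k+1) = Sk D e1 (k+2) := by
  apply Finset.Subset.antisymm (Sk_mono (by omega))
  intro f hf
  rw [mem_Sk] at hf ⊢
  refine ⟨hf.1, ?_⟩
  rcases hf.2 with h1 | ⟨hfD, g, hg, x, hxg, hxf⟩
  · exact h1
  · have hgD : g ∈ D := reachN_memD he hg
    have : g ∈ Sk D e1 (k+1) := mem_Sk.mpr ⟨hgD, hg⟩
    rw [← h, mem_Sk] at this
    exact Or.inr ⟨hfD, g, this.2, x, hxg, hxf⟩

lemma Sk_stab_ge {D : Finset (Sym2 V)} {e1 : Sym2 V} (he : e1 ∈ D) {k : ℕ}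
    (h : Sk D e1 k = Sk D e1 (k+1)) : ∀ j, k ≤ j → Sk D e1 j = Sk D e1 (j+1) := by
  intro j hj
  induction j with
  | zero => have : k = 0 := by omega
            subst this; exact h
  | succ j ih =>
    rcases Nat.lt_or_ge k (j+1) with h1 | h1
    · exact Sk_stab_step he (ih (by omega))
    · have : k = j + 1 := by omega
      subst this; exact h

lemma Sk_stab_card {D : Finset (Sym2 V)} {e1 : Sym2 V} (he : e1 ∈ D) :
    Sk D e1 D.card = Sk D e1 (D.card + 1) := by
  by_contra hne
  -- then all Sk k for k ≤ D.card are strictly increasing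
  have hstrict : ∀ k, k ≤ D.card → Sk D e1 k ≠ Sk D e1 (k+1) := by
    intro k hk h
    exact hne (Sk_stab_ge he h D.card hk)
  have hcard : ∀ k, k ≤ D.card → k + 1 ≤ (Sk D e1 k).card := by
    intro k
    induction k with
    | zero =>
      intro _
      have : e1 ∈ Sk D e1 0 := mem_Sk.mpr ⟨he, rfl⟩
      exact Finset.card_pos.mpr ⟨e1, this⟩
    | succ k ih =>
      intro hk
      have h1 : Sk D e1 k ⊂ Sk D e1 (k+1) :=
        lt_of_le_of_ne (Sk_mono (by omega)) (hstrict k (by omega))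
      have := Finset.card_lt_card h1
      have := ih (by omega)
      omega
  have h1 := hcard D.card le_rfl
  have h2 : (Sk D e1 D.card).card ≤ D.card :=
    Finset.card_le_card (Finset.filter_subset _ _)
  omega

noncomputable def compo (D : Finset (Sym2 V)) (e1 : Sym2 V) : Finset (Sym2 V) :=
  Sk D e1 D.card

lemma compo_subset {D : Finset (Sym2 V)} {e1 : Sym2 V} : compo D e1 ⊆ D :=
  Finset.filter_subset _ _

lemma mem_compo_self {D : Finset (Sym2 V)} {e1 : Sym2 V} (he : e1 ∈ D) :
    e1 ∈ compo D e1 :=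
  mem_Sk.mpr ⟨he, reachN_le (Nat.zero_le _) (rfl : reachN D e1 0 e1)⟩

lemma compo_closed {D : Finset (Sym2 V)} {e1 : Sym2 V} (he : e1 ∈ D) {f g : Sym2 V}
    (hf : f ∈ compo D e1) (hg : g ∈ D) (hshare : ∃ x : V, x ∈ f ∧ x ∈ g) :
    g ∈ compo D e1 := by
  rw [compo, Sk_stab_card he, mem_Sk]
  rw [compo, mem_Sk] at hf
  exact ⟨hg, Or.inr ⟨hg, f, hf.2, hshare⟩⟩

lemma compo_min {D : Finset (Sym2 V)} {e1 : Sym2 V} (he : e1 ∈ D)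
    {E : Finset (Sym2 V)}
    (hE : ∀ f ∈ E, ∀ g ∈ D, (∃ x : V, x ∈ f ∧ x ∈ g) → g ∈ E)
    (he1E : e1 ∈ E) : compo D e1 ⊆ E := by
  intro f hf
  rw [compo, mem_Sk] at hf
  obtain ⟨hfD, hr⟩ := hf
  clear hfD
  generalize D.card = k at hr
  induction k generalizing f with
  | zero => cases hr; exact he1E
  | succ k ih =>
    rcases hr with h | ⟨hfD, g, hg, x, hxg, hxf⟩
    · exact ih h
    · exact hE g (ih hg) f hfD ⟨x, hxg, hxf⟩

lemma sym2_no_three {e : Sym2 V} {x y z : V} (hx : x ∈ e) (hy : y ∈ e) (hz : z ∈ e)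
    (hxy : x ≠ y) (hxz : x ≠ z) (hyz : y ≠ z) : False := by
  induction e using Sym2.ind with
  | _ a b =>
    rw [Sym2.mem_iff] at hx hy hz
    rcases hx with rfl | rfl <;> rcases hy with rfl | rfl <;> rcases hz with rfl | rfl <;>
      simp_all

lemma verts_grow {T T' : Finset (Sym2 V)} (hTT : T ⊆ T')
    (hnew : ∀ f ∈ T', f ∉ T → ∃ g ∈ T, ∃ x : V, x ∈ g ∧ x ∈ f) :
    (verts T').card ≤ (verts T).card + (T' \ T).card := by
  classical
  have hsub : verts T' \ verts T ⊆ verts T' := Finset.sdiff_subset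
  have hinj : ((verts T') \ (verts T)).card ≤ (T' \ T).card := by
    apply Finset.card_le_card_of_injOn
      (fun x => if h : ∃ e ∈ T' \ T, x ∈ e then h.choose else Sym2.diag x)
    · intro x hx
      rw [Finset.mem_coe, Finset.mem_sdiff] at hx
      obtain ⟨hx1, hx2⟩ := hx
      rw [mem_verts] at hx1
      obtain ⟨e, heT', hxe⟩ := hx1
      have heT : e ∉ T := fun h => hx2 (mem_verts.mpr ⟨e, h, hxe⟩)
      have hex : ∃ e ∈ T' \ T, x ∈ e := ⟨e, Finset.mem_sdiff.mpr ⟨heT', heT⟩, hxe⟩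
      simp only [dif_pos hex]
      exact hex.choose_spec.1
    · intro x hx y hy hxyeq
      by_contra hne
      rw [Finset.coe_sdiff, Set.mem_diff] at hx hy
      have hx2 := hx.2
      have hy2 := hy.2
      rw [Finset.mem_coe, mem_verts] at hx hy hx2 hy2
      push_neg at hx2 hy2
      obtain ⟨ex, hexT', hxex⟩ := hx.1
      obtain ⟨ey, heyT', hyey⟩ := hy.1
      have hexm : ∃ e ∈ T' \ T, x ∈ e :=
        ⟨ex, Finset.mem_sdiff.mpr ⟨hexT', fun h => hx2 ex h hxex⟩, hxex⟩
      have heym : ∃ e ∈ T' \ T, y ∈ e :=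
        ⟨ey, Finset.mem_sdiff.mpr ⟨heyT', fun h => hy2 ey h hyey⟩, hyey⟩
      dsimp only at hxyeq
      rw [dif_pos hexm, dif_pos heym] at hxyeq
      have hxmem : x ∈ hexm.choose := hexm.choose_spec.2
      have hymem : y ∈ heym.choose := heym.choose_spec.2
      rw [hxyeq] at hxmem
      set e := heym.choose with he
      have heT' : e ∈ T' \ T := heym.choose_spec.1
      rw [Finset.mem_sdiff] at heT'
      obtain ⟨g, hgT, z, hzg, hze⟩ := hnew e heT'.1 heT'.2
      have hzx : z ≠ x := fun h => hx2 g hgT (h ▸ hzg)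
      have hzy : z ≠ y := fun h => hy2 g hgT (h ▸ hzg)
      exact sym2_no_three hxmem hymem hze hne (Ne.symm hzx) (Ne.symm hzy)
  have hunion : verts T' = verts T ∪ (verts T' \ verts T) := by
    rw [Finset.union_sdiff_of_subset (verts_mono hTT)]
  have hcards : (verts T').card ≤ (verts T).card + (verts T' \ verts T).card := by
    conv_lhs => rw [hunion]
    exact Finset.card_union_le _ _
  omega

lemma card_verts_compo {D : Finset (Sym2 V)} {e1 : Sym2 V} (he : e1 ∈ D) :
    (verts (compo D e1)).card ≤ (compo D e1).card + 1 := by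
  have key : ∀ k, (verts (Sk D e1 k)).card ≤ (Sk D e1 k).card + 1 := by
    intro k
    induction k with
    | zero =>
      have h0 : Sk D e1 0 = {e1} := by
        ext f
        simp only [mem_Sk, Finset.mem_singleton]
        constructor
        · rintro ⟨_, h⟩; exact h
        · rintro rfl; exact ⟨he, rfl⟩
      rw [h0]
      induction e1 using Sym2.ind with
      | _ a b =>
        have : verts ({s(a, b)} : Finset (Sym2 V)) ⊆ {a, b} := by
          intro v hv
          rw [mem_verts] at hv
          obtain ⟨e, he', hv⟩ := hv
          rw [Finset.mem_singleton] at he'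
          subst he'
          rw [Sym2.mem_iff] at hv
          simpa using hv
        calc (verts ({s(a, b)} : Finset (Sym2 V))).card ≤ ({a, b} : Finset V).card :=
              Finset.card_le_card this
          _ ≤ 2 := Finset.card_insert_le _ _ |>.trans (by simp)
          _ = ({s(a, b)} : Finset (Sym2 V)).card + 1 := by simp
    | succ k ih =>
      have hTT : Sk D e1 k ⊆ Sk D e1 (k+1) := Sk_mono (by omega)
      have hnew : ∀ f ∈ Sk D e1 (k+1), f ∉ Sk D e1 k →
          ∃ g ∈ Sk D e1 k, ∃ x : V, x ∈ g ∧ x ∈ f := by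
        intro f hf hfn
        rw [mem_Sk] at hf
        rcases hf.2 with h1 | ⟨hfD, g, hg, x, hxg, hxf⟩
        · exact absurd (mem_Sk.mpr ⟨hf.1, h1⟩) hfn
        · exact ⟨g, mem_Sk.mpr ⟨reachN_memD he hg, hg⟩, x, hxg, hxf⟩
      have h1 := verts_grow hTT hnew
      have h2 : (Sk D e1 (k+1) \ Sk D e1 k).card = (Sk D e1 (k+1)).card - (Sk D e1 k).card :=
        Finset.card_sdiff_of_subset hTT
      have h3 : (Sk D e1 k).card ≤ (Sk D e1 (k+1)).card := Finset.card_le_card hTT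
      omega
  exact key D.card

lemma card_verts_matching {M : Finset (Sym2 V)} (hd : ∀ e ∈ M, ¬ e.IsDiag)
    (hp : (M : Set (Sym2 V)).Pairwise (fun e f => ∀ v : V, v ∈ e → v ∉ f)) :
    (verts M).card = 2 * M.card := by
  classical
  have hbU : verts M = M.biUnion (fun e => Finset.univ.filter (· ∈ e)) := by
    ext v
    simp [mem_verts]
  have hcard2 : ∀ e ∈ M, (Finset.univ.filter (· ∈ e)).card = 2 := by
    intro e heM
    induction e using Sym2.ind with
    | _ a b =>
      have hab : a ≠ b := by
        intro h
        exact hd _ heM (by simp [h, Sym2.isDiag_iff_proj_eq])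
      have : (Finset.univ.filter (· ∈ s(a, b))) = {a, b} := by
        ext x
        simp [Sym2.mem_iff]
      rw [this, Finset.card_insert_of_notMem (by simp [hab]), Finset.card_singleton]
  rw [hbU, Finset.card_biUnion]
  · rw [Finset.sum_congr rfl hcard2, Finset.sum_const, smul_eq_mul, mul_comm]
  · intro e heM f hfM hef
    have := hp heM hfM hef
    rw [Function.onFun, Finset.disjoint_left]
    intro x hx hx'
    rw [Finset.mem_filter] at hx hx'
    exact this x hx.2 hx'.2

lemma swap_matching {P Q : Finset (Sym2 V)}
    (hPdiag : ∀ e ∈ P, ¬ e.IsDiag)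
    (hPpair : (P : Set (Sym2 V)).Pairwise (fun e f => ∀ v : V, v ∈ e → v ∉ f))
    (hQdiag : ∀ e ∈ Q, ¬ e.IsDiag)
    (hQpair : (Q : Set (Sym2 V)).Pairwise (fun e f => ∀ v : V, v ∈ e → v ∉ f))
    {D : Finset (Sym2 V)}
    (hDdef : ∀ f, f ∈ D ↔ (f ∈ P ∧ f ∉ Q) ∨ (f ∈ Q ∧ f ∉ P))
    {S : Finset (Sym2 V)} (hSD : S ⊆ D)
    (hScl : ∀ f ∈ S, ∀ g ∈ D, (∃ x : V, x ∈ f ∧ x ∈ g) → g ∈ S) :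
    (∀ e ∈ (Q \ S) ∪ (S ∩ P), ¬ e.IsDiag) ∧
    (((Q \ S) ∪ (S ∩ P) : Finset (Sym2 V)) : Set (Sym2 V)).Pairwise
      (fun e f => ∀ v : V, v ∈ e → v ∉ f) := by
  constructor
  · intro e he
    rw [Finset.mem_union] at he
    rcases he with he | he
    · exact hQdiag e (Finset.mem_sdiff.mp he).1
    · exact hPdiag e (Finset.mem_inter.mp he).2
  · intro e he f hf hef v hve hvf
    rw [Finset.mem_coe, Finset.mem_union] at he hf
    -- key mixed case as an auxiliary claim
    have mixed : ∀ e' f' : Sym2 V, e' ∈ Q \ S → f' ∈ S ∩ P → e' ≠ f' →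
        ∀ x : V, x ∈ e' → x ∉ f' := by
      intro e' f' he' hf' hne x hxe hxf
      rw [Finset.mem_sdiff] at he'
      rw [Finset.mem_inter] at hf'
      by_cases heP : e' ∈ P
      · exact hPpair heP hf'.2 hne x hxe hxf
      · have he'D : e' ∈ D := (hDdef e').mpr (Or.inr ⟨he'.1, heP⟩)
        have : e' ∈ S := hScl f' hf'.1 e' he'D ⟨x, hxf, hxe⟩
        exact he'.2 this
    rcases he with he | he <;> rcases hf with hf | hf
    · exact hQpair (Finset.mem_sdiff.mp he).1 (Finset.mem_sdiff.mp hf).1 hef v hve hvf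
    · exact mixed e f he hf hef v hve hvf
    · exact mixed f e hf he (Ne.symm hef) v hvf hve
    · exact hPpair (Finset.mem_inter.mp he).2 (Finset.mem_inter.mp hf).2 hef v hve hvf

end Stmt17Aux

open Stmt17Aux

/-- Stability of optimal partial matchings: on a complete graph with `2N` vertices and
nonnegative edge weights, if the minimum-weight `n`-matching `Mn` and the minimum-weight
`(n+1)`-matching `Mn1` are each unique, then every vertex covered by `Mn` is also covered
by `Mn1`. -/
theorem stmt_17 {V : Type*} [Fintype V] [DecidableEq V] (N : ℕ)
    (hV : Fintype.card V = 2 * N)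
    (w : Sym2 V → ℝ) (hw : ∀ e, 0 ≤ w e)
    (n : ℕ) (hn : 1 ≤ n) (hnN : n ≤ N - 1)
    (Mn Mn1 : Finset (Sym2 V))
    (hMn : IsKMatching n Mn) (hMn1 : IsKMatching (n + 1) Mn1)
    (hMnopt : ∀ M : Finset (Sym2 V), IsKMatching n M → ∑ e ∈ Mn, w e ≤ ∑ e ∈ M, w e)
    (hMn1opt : ∀ M : Finset (Sym2 V), IsKMatching (n + 1) M → ∑ e ∈ Mn1, w e ≤ ∑ e ∈ M, w e)
    (hMnuniq : ∀ M : Finset (Sym2 V), IsKMatching n M → (∑ e ∈ M, w e) = ∑ e ∈ Mn, w e → M = Mn)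
    (hMn1uniq : ∀ M : Finset (Sym2 V), IsKMatching (n + 1) M →
      (∑ e ∈ M, w e) = ∑ e ∈ Mn1, w e → M = Mn1) :
    ∀ v : V, (∃ e ∈ Mn, v ∈ e) → (∃ e ∈ Mn1, v ∈ e) := by
  classical
  intro v hv
  by_contra hvnot
  push_neg at hvnot
  obtain ⟨e1, he1Mn, hve1⟩ := hv
  obtain ⟨hMncard, hMndiag, hMnpair⟩ := hMn
  obtain ⟨hMn1card, hMn1diag, hMn1pair⟩ := hMn1
  set D : Finset (Sym2 V) := (Mn \ Mn1) ∪ (Mn1 \ Mn) with hDdefn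
  have hDdef : ∀ f, f ∈ D ↔ (f ∈ Mn ∧ f ∉ Mn1) ∨ (f ∈ Mn1 ∧ f ∉ Mn) := by
    intro f; simp [hDdefn]
  have hDdef' : ∀ f, f ∈ D ↔ (f ∈ Mn1 ∧ f ∉ Mn) ∨ (f ∈ Mn ∧ f ∉ Mn1) := by
    intro f; rw [hDdef]; tauto
  have he1nMn1 : e1 ∉ Mn1 := fun h => hvnot e1 h hve1
  have he1D : e1 ∈ D := (hDdef e1).mpr (Or.inl ⟨he1Mn, he1nMn1⟩)
  -- splitting a subset of D
  have hsplit : ∀ S : Finset (Sym2 V), S ⊆ D → (S ∩ Mn).card + (S ∩ Mn1).card = S.card := by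
    intro S hS
    have hdisj : Disjoint (S ∩ Mn) (S ∩ Mn1) := by
      rw [Finset.disjoint_left]
      intro f hf hf'
      rw [Finset.mem_inter] at hf hf'
      have := (hDdef f).mp (hS hf.1)
      tauto
    have hunion : (S ∩ Mn) ∪ (S ∩ Mn1) = S := by
      ext f
      constructor
      · intro hf
        rw [Finset.mem_union, Finset.mem_inter, Finset.mem_inter] at hf
        tauto
      · intro hf
        have := (hDdef f).mp (hS hf)
        rw [Finset.mem_union, Finset.mem_inter, Finset.mem_inter]
        tauto
    rw [← Finset.card_union_of_disjoint hdisj, hunion]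
  -- cardinality of vertex sets of sub-matchings
  have hsubMn : ∀ S : Finset (Sym2 V), S ⊆ Mn → (verts S).card = 2 * S.card := by
    intro S hS
    exact card_verts_matching (fun e he => hMndiag e (hS he))
      (hMnpair.mono (Finset.coe_subset.mpr hS))
  have hsubMn1 : ∀ S : Finset (Sym2 V), S ⊆ Mn1 → (verts S).card = 2 * S.card := by
    intro S hS
    exact card_verts_matching (fun e he => hMn1diag e (hS he))
      (hMn1pair.mono (Finset.coe_subset.mpr hS))
  -- component imbalance bounds
  have hbound1 : ∀ f0 ∈ D, ((compo D f0) ∩ Mn1).card ≤ ((compo D f0) ∩ Mn).card + 1 := by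
    intro f0 hf0
    have h1 : (verts ((compo D f0) ∩ Mn1)).card = 2 * ((compo D f0) ∩ Mn1).card :=
      hsubMn1 _ Finset.inter_subset_right
    have h2 : (verts ((compo D f0) ∩ Mn1)).card ≤ (verts (compo D f0)).card :=
      Finset.card_le_card (verts_mono Finset.inter_subset_left)
    have h3 := card_verts_compo hf0
    have h4 := hsplit (compo D f0) compo_subset
    omega
  have hbound2 : ∀ f0 ∈ D, ((compo D f0) ∩ Mn).card ≤ ((compo D f0) ∩ Mn1).card + 1 := by
    intro f0 hf0
    have h1 : (verts ((compo D f0) ∩ Mn)).card = 2 * ((compo D f0) ∩ Mn).card :=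
      hsubMn _ Finset.inter_subset_right
    have h2 : (verts ((compo D f0) ∩ Mn)).card ≤ (verts (compo D f0)).card :=
      Finset.card_le_card (verts_mono Finset.inter_subset_left)
    have h3 := card_verts_compo hf0
    have h4 := hsplit (compo D f0) compo_subset
    omega
  -- the exchange argument
  have hexchange : ∀ S : Finset (Sym2 V), S ⊆ D →
      (∀ f ∈ S, ∀ g ∈ D, (∃ x : V, x ∈ f ∧ x ∈ g) → g ∈ S) →
      e1 ∈ S → (S ∩ Mn).card = (S ∩ Mn1).card → False := by
    intro S hSD hScl he1S hbal
    set Mn1' : Finset (Sym2 V) := (Mn1 \ S) ∪ (S ∩ Mn) with hM1'def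
    set Mn' : Finset (Sym2 V) := (Mn \ S) ∪ (S ∩ Mn1) with hM'def
    have hdisj1 : Disjoint (Mn1 \ S) (S ∩ Mn) := by
      rw [Finset.disjoint_left]
      intro f hf hf'
      exact (Finset.mem_sdiff.mp hf).2 (Finset.mem_inter.mp hf').1
    have hdisj2 : Disjoint (Mn \ S) (S ∩ Mn1) := by
      rw [Finset.disjoint_left]
      intro f hf hf'
      exact (Finset.mem_sdiff.mp hf).2 (Finset.mem_inter.mp hf').1
    have hsd1 : Mn1 \ S = Mn1 \ (Mn1 ∩ S) := (Finset.sdiff_inter_self_left Mn1 S).symm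
    have hsd2 : Mn \ S = Mn \ (Mn ∩ S) := (Finset.sdiff_inter_self_left Mn S).symm
    have hcomm1 : (Mn1 ∩ S).card = (S ∩ Mn1).card := by rw [Finset.inter_comm]
    have hcomm2 : (Mn ∩ S).card = (S ∩ Mn).card := by rw [Finset.inter_comm]
    have hle1 : (Mn1 ∩ S).card ≤ Mn1.card := Finset.card_le_card Finset.inter_subset_left
    have hle2 : (Mn ∩ S).card ≤ Mn.card := Finset.card_le_card Finset.inter_subset_left
    have hcard1 : Mn1'.card = n + 1 := by
      rw [hM1'def, Finset.card_union_of_disjoint hdisj1, hsd1,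
        Finset.card_sdiff_of_subset Finset.inter_subset_left]
      omega
    have hcard2 : Mn'.card = n := by
      rw [hM'def, Finset.card_union_of_disjoint hdisj2, hsd2,
        Finset.card_sdiff_of_subset Finset.inter_subset_left]
      omega
    have hsw1 := swap_matching hMndiag hMnpair hMn1diag hMn1pair hDdef hSD hScl
    have hsw2 := swap_matching hMn1diag hMn1pair hMndiag hMnpair hDdef' hSD hScl
    have hM1' : IsKMatching (n + 1) Mn1' := ⟨hcard1, hsw1.1, hsw1.2⟩
    have hM' : IsKMatching n Mn' := ⟨hcard2, hsw2.1, hsw2.2⟩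
    -- weights
    have hsum1 : ∑ e ∈ Mn1', w e = ∑ e ∈ Mn1, w e - ∑ e ∈ S ∩ Mn1, w e + ∑ e ∈ S ∩ Mn, w e := by
      rw [hM1'def, Finset.sum_union hdisj1, hsd1,
        Finset.sum_sdiff_eq_sub Finset.inter_subset_left, Finset.inter_comm]
    have hsum2 : ∑ e ∈ Mn', w e = ∑ e ∈ Mn, w e - ∑ e ∈ S ∩ Mn, w e + ∑ e ∈ S ∩ Mn1, w e := by
      rw [hM'def, Finset.sum_union hdisj2, hsd2,
        Finset.sum_sdiff_eq_sub Finset.inter_subset_left, Finset.inter_comm]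
    have hopt1 := hMn1opt Mn1' hM1'
    have hopt2 := hMnopt Mn' hM'
    have heqsum : ∑ e ∈ Mn1', w e = ∑ e ∈ Mn1, w e := by linarith
    have := hMn1uniq Mn1' hM1' heqsum
    have he1M1' : e1 ∈ Mn1' := by
      rw [hM1'def]
      exact Finset.mem_union_right _ (Finset.mem_inter.mpr ⟨he1S, he1Mn⟩)
    rw [this] at he1M1'
    exact he1nMn1 he1M1'
  -- the component of e1
  set C : Finset (Sym2 V) := compo D e1 with hCdef
  have hCsub : C ⊆ D := compo_subset
  have hCcl : ∀ f ∈ C, ∀ g ∈ D, (∃ x : V, x ∈ f ∧ x ∈ g) → g ∈ C :=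
    fun f hf g hg hs => compo_closed he1D hf hg hs
  have he1C : e1 ∈ C := mem_compo_self he1D
  -- v is in verts C but not in verts (C ∩ Mn1), so strict bound
  have hvC : v ∈ verts C := mem_verts.mpr ⟨e1, he1C, hve1⟩
  have hCimb : (C ∩ Mn1).card ≤ (C ∩ Mn).card := by
    have hvnB : v ∉ verts (C ∩ Mn1) := by
      intro h
      obtain ⟨e, he, hvee⟩ := mem_verts.mp h
      exact hvnot e (Finset.mem_inter.mp he).2 hvee
    have hsubset : verts (C ∩ Mn1) ⊆ (verts C).erase v := by
      intro x hx
      rw [Finset.mem_erase]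
      refine ⟨fun h => hvnB (h ▸ hx), verts_mono Finset.inter_subset_left hx⟩
    have h1 : (verts (C ∩ Mn1)).card ≤ (verts C).card - 1 := by
      have := Finset.card_le_card hsubset
      rw [Finset.card_erase_of_mem hvC] at this
      exact this
    have h2 : (verts (C ∩ Mn1)).card = 2 * (C ∩ Mn1).card :=
      hsubMn1 _ Finset.inter_subset_right
    have h3 := card_verts_compo he1D
    rw [← hCdef] at h3
    have h4 := hsplit C hCsub
    have h5 : 1 ≤ (verts C).card := Finset.card_pos.mpr ⟨v, hvC⟩
    omega
  rcases Nat.eq_or_lt_of_le hCimb with heq | hlt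
  · exact hexchange C hCsub hCcl he1C heq.symm
  · -- strict deficit: find a compensating component in D \ C
    have hCMnbound := hbound2 e1 he1D
    rw [← hCdef] at hCMnbound
    have hCeq : (C ∩ Mn).card = (C ∩ Mn1).card + 1 := by omega
    -- global imbalance of D
    have hDMn : D ∩ Mn = Mn \ Mn1 := by
      ext f
      rw [Finset.mem_inter, hDdef f, Finset.mem_sdiff]
      tauto
    have hDMn1 : D ∩ Mn1 = Mn1 \ Mn := by
      ext f
      rw [Finset.mem_inter, hDdef f, Finset.mem_sdiff]
      tauto
    have hglob : (D ∩ Mn1).card = (D ∩ Mn).card + 1 := by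
      rw [hDMn, hDMn1]
      have h1 : Mn \ Mn1 = Mn \ (Mn ∩ Mn1) := (Finset.sdiff_inter_self_left Mn Mn1).symm
      have h2 : Mn1 \ Mn = Mn1 \ (Mn1 ∩ Mn) := (Finset.sdiff_inter_self_left Mn1 Mn).symm
      rw [h1, h2, Finset.card_sdiff_of_subset Finset.inter_subset_left,
        Finset.card_sdiff_of_subset Finset.inter_subset_left]
      have h3 : (Mn ∩ Mn1).card = (Mn1 ∩ Mn).card := by rw [Finset.inter_comm]
      have h4 : (Mn ∩ Mn1).card ≤ Mn.card := Finset.card_le_card Finset.inter_subset_left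
      have h5 : (Mn1 ∩ Mn).card ≤ Mn1.card := Finset.card_le_card Finset.inter_subset_left
      omega
    -- the complement E = D \ C
    set E : Finset (Sym2 V) := D \ C with hEdef
    have hEsub : E ⊆ D := Finset.sdiff_subset
    have hEcl : ∀ f ∈ E, ∀ g ∈ D, (∃ x : V, x ∈ f ∧ x ∈ g) → g ∈ E := by
      intro f hf g hg hs
      rw [hEdef, Finset.mem_sdiff] at hf ⊢
      refine ⟨hg, fun hgC => hf.2 ?_⟩
      obtain ⟨x, hxf, hxg⟩ := hs
      exact hCcl g hgC f (hf.1) ⟨x, hxg, hxf⟩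
    have hinterE : ∀ M0 : Finset (Sym2 V), (E ∩ M0).card = (D ∩ M0).card - (C ∩ M0).card ∧
        (C ∩ M0).card ≤ (D ∩ M0).card := by
      intro M0
      have h1 : E ∩ M0 = (D ∩ M0) \ (C ∩ M0) := by
        ext f
        rw [Finset.mem_inter, hEdef, Finset.mem_sdiff, Finset.mem_sdiff,
          Finset.mem_inter, Finset.mem_inter]
        constructor
        · rintro ⟨⟨h1, h2⟩, h3⟩; exact ⟨⟨h1, h3⟩, fun h => h2 h.1⟩
        · rintro ⟨⟨h1, h3⟩, h2⟩; exact ⟨⟨h1, fun h => h2 ⟨h, h3⟩⟩, h3⟩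
      have hsub' : C ∩ M0 ⊆ D ∩ M0 :=
        Finset.inter_subset_inter hCsub (Finset.Subset.refl _)
      exact ⟨by rw [h1, Finset.card_sdiff_of_subset hsub'], Finset.card_le_card hsub'⟩
    have hElt : (E ∩ Mn).card < (E ∩ Mn1).card := by
      obtain ⟨ha, hb⟩ := hinterE Mn
      obtain ⟨hc, hd⟩ := hinterE Mn1
      omega
    -- find a balancing component inside E
    have hfind : ∀ m : ℕ, ∀ F : Finset (Sym2 V), F.card ≤ m → F ⊆ D →
        (∀ f ∈ F, ∀ g ∈ D, (∃ x : V, x ∈ f ∧ x ∈ g) → g ∈ F) →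
        (F ∩ Mn).card < (F ∩ Mn1).card →
        ∃ Q : Finset (Sym2 V), Q ⊆ F ∧
          (∀ f ∈ Q, ∀ g ∈ D, (∃ x : V, x ∈ f ∧ x ∈ g) → g ∈ Q) ∧
          (Q ∩ Mn1).card = (Q ∩ Mn).card + 1 := by
      intro m
      induction m with
      | zero =>
        intro F hFcard _ _ hFlt
        rw [Nat.le_zero, Finset.card_eq_zero] at hFcard
        subst hFcard
        simp at hFlt
      | succ m ih =>
        intro F hFcard hFD hFcl hFlt
        have hne : (F ∩ Mn1).Nonempty := by
          rw [← Finset.card_pos]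
          omega
        obtain ⟨f0, hf0⟩ := hne
        rw [Finset.mem_inter] at hf0
        have hf0D : f0 ∈ D := hFD hf0.1
        set C0 : Finset (Sym2 V) := compo D f0 with hC0def
        have hC0F : C0 ⊆ F := compo_min hf0D hFcl hf0.1
        have hC0cl : ∀ f ∈ C0, ∀ g ∈ D, (∃ x : V, x ∈ f ∧ x ∈ g) → g ∈ C0 :=
          fun f hf g hg hs => compo_closed hf0D hf hg hs
        have hC0b := hbound1 f0 hf0D
        rw [← hC0def] at hC0b
        by_cases hceq : (C0 ∩ Mn1).card = (C0 ∩ Mn).card + 1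
        · exact ⟨C0, hC0F, hC0cl, hceq⟩
        · -- recurse on F \ C0
          set F' : Finset (Sym2 V) := F \ C0 with hF'def
          have hF'D : F' ⊆ D := fun f hf => hFD (Finset.mem_sdiff.mp hf).1
          have hF'cl : ∀ f ∈ F', ∀ g ∈ D, (∃ x : V, x ∈ f ∧ x ∈ g) → g ∈ F' := by
            intro f hf g hg hs
            rw [hF'def, Finset.mem_sdiff] at hf ⊢
            refine ⟨hFcl f hf.1 g hg hs, fun hgC0 => hf.2 ?_⟩
            obtain ⟨x, hxf, hxg⟩ := hs
            exact hC0cl g hgC0 f (hFD hf.1) ⟨x, hxg, hxf⟩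
          have hinterF : ∀ M0 : Finset (Sym2 V),
              (F' ∩ M0).card = (F ∩ M0).card - (C0 ∩ M0).card ∧
              (C0 ∩ M0).card ≤ (F ∩ M0).card := by
            intro M0
            have h1 : F' ∩ M0 = (F ∩ M0) \ (C0 ∩ M0) := by
              ext f
              rw [Finset.mem_inter, hF'def, Finset.mem_sdiff, Finset.mem_sdiff,
                Finset.mem_inter, Finset.mem_inter]
              constructor
              · rintro ⟨⟨h1, h2⟩, h3⟩; exact ⟨⟨h1, h3⟩, fun h => h2 h.1⟩
              · rintro ⟨⟨h1, h3⟩, h2⟩; exact ⟨⟨h1, fun h => h2 ⟨h, h3⟩⟩, h3⟩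
            have hsub' : C0 ∩ M0 ⊆ F ∩ M0 :=
              Finset.inter_subset_inter hC0F (Finset.Subset.refl _)
            exact ⟨by rw [h1, Finset.card_sdiff_of_subset hsub'], Finset.card_le_card hsub'⟩
          have hF'lt : (F' ∩ Mn).card < (F' ∩ Mn1).card := by
            obtain ⟨ha, hb⟩ := hinterF Mn
            obtain ⟨hc, hd⟩ := hinterF Mn1
            omega
          have hF'card : F'.card ≤ m := by
            have hC0ne : C0.Nonempty := ⟨f0, mem_compo_self hf0D⟩
            have hss : F' ⊂ F := by
              rw [hF'def]
              exact Finset.sdiff_ssubset hC0F hC0ne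
            have := Finset.card_lt_card hss
            omega
          obtain ⟨Q, hQF', hQcl, hQbal⟩ := ih F' hF'card hF'D hF'cl hF'lt
          exact ⟨Q, fun f hf => (Finset.mem_sdiff.mp (hQF' hf)).1, hQcl, hQbal⟩
    obtain ⟨Q, hQE, hQcl, hQbal⟩ := hfind E.card E le_rfl hEsub hEcl hElt
    -- combine C and Q
    have hQD : Q ⊆ D := fun f hf => hEsub (hQE hf)
    have hQCdisj : Disjoint Q C := by
      rw [Finset.disjoint_left]
      intro f hf hfC
      exact (Finset.mem_sdiff.mp (hQE hf)).2 hfC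
    set S : Finset (Sym2 V) := C ∪ Q with hSdef
    have hSD : S ⊆ D := Finset.union_subset hCsub hQD
    have hScl : ∀ f ∈ S, ∀ g ∈ D, (∃ x : V, x ∈ f ∧ x ∈ g) → g ∈ S := by
      intro f hf g hg hs
      rw [hSdef, Finset.mem_union] at hf ⊢
      rcases hf with hf | hf
      · exact Or.inl (hCcl f hf g hg hs)
      · exact Or.inr (hQcl f hf g hg hs)
    have he1S : e1 ∈ S := Finset.mem_union_left _ he1C
    have hScard : ∀ M0 : Finset (Sym2 V), (S ∩ M0).card = (C ∩ M0).card + (Q ∩ M0).card := by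
      intro M0
      have h1 : S ∩ M0 = (C ∩ M0) ∪ (Q ∩ M0) := by
        rw [hSdef, Finset.union_inter_distrib_right]
      have h2 : Disjoint (C ∩ M0) (Q ∩ M0) :=
        Finset.disjoint_of_subset_left Finset.inter_subset_left
          (Finset.disjoint_of_subset_right Finset.inter_subset_left hQCdisj.symm)
      rw [h1, Finset.card_union_of_disjoint h2]
    have hSbal : (S ∩ Mn).card = (S ∩ Mn1).card := by
      rw [hScard Mn, hScard Mn1]
      omega
    exact hexchange S hSD hScl he1S hSbal
end
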